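/- arXiv:1112.4239 — 4 statements merged into one kernel-verified Lean document; each statement's English description precedes it below -/
import Mathlib

section
/- Let G be an infinite compact, Hausdorff, totally disconnected topological group and α a topological group automorphism of G. Suppose V and V' are open subgroups of G such that ⋂_{k∈ℤ} α^k(V) = {1}, ⋂_{k∈ℤ} α^k(V') = {1}, V = V₊V₋ and V' = V'₊V'₋. Then the index [α(V₊) : V₊] of V₊ in α(V₊) is finite, strictly greater than 1, and equal to [α(V'₊) : V'₊]. -/
open Pointwise Filter Topology

variable {G : Type*}

/-- `V₊ = ⋂_{k ≥ 0} α^k(V)`. -/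
def plusPart [Group G] (α : MulAut G) (V : Set G) : Set G :=
  ⋂ k : ℕ, ⇑(α ^ k) '' V

/-- `V₋ = ⋂_{k ≥ 0} α^{-k}(V)`. -/
def minusPart [Group G] (α : MulAut G) (V : Set G) : Set G :=
  ⋂ k : ℕ, ⇑(α⁻¹ ^ k) '' V

/-- `V` is tidy above for `α` if `V = V₊V₋`. -/
def TidyAbove [Group G] (α : MulAut G) (V : Set G) : Prop :=
  V = plusPart α V * minusPart α V

/-- `V` is tidy below for `α` if `V₊₊` and `V₋₋` are closed. -/
def TidyBelow [Group G] [TopologicalSpace G] (α : MulAut G) (V : Set G) : Prop :=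
  IsClosed (⋃ k : ℕ, ⇑(α ^ k) '' plusPart α V) ∧
  IsClosed (⋃ k : ℕ, ⇑(α⁻¹ ^ k) '' minusPart α V)

/-- `V` is tidy for `α` if it is tidy above and tidy below. -/
def Tidy [Group G] [TopologicalSpace G] (α : MulAut G) (V : Set G) : Prop :=
  TidyAbove α V ∧ TidyBelow α V

/-- The nub of `α`: the intersection of all compact open subgroups tidy for `α`. -/
def nub [Group G] [TopologicalSpace G] (α : MulAut G) : Subgroup G :=
  ⨅ V ∈ {V : Subgroup G | IsCompact (V : Set G) ∧ IsOpen (V : Set G) ∧ Tidy α (V : Set G)}, V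

/-- The contraction group `con(α) = { x | α^n(x) → 1 as n → ∞ }`. -/
def conSet [Group G] [TopologicalSpace G] (α : MulAut G) : Set G :=
  {x : G | Tendsto (fun n : ℕ => (α ^ n) x) atTop (𝓝 1)}

/-- The homoclinic (two-sided contraction) group `bcg(α) = con(α) ∩ con(α⁻¹)`. -/
def bcgSet [Group G] [TopologicalSpace G] (α : MulAut G) : Set G :=
  conSet α ∩ conSet α⁻¹

/-- The bounded contraction group `bcon(α)`. -/
def bconSet [Group G] [TopologicalSpace G] (α : MulAut G) : Set G :=
  {x ∈ conSet α | IsCompact (closure (Set.range fun n : ℕ => (α⁻¹ ^ n) x))}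

/-- Image of a subgroup under an automorphism. -/
def mapAut [Group G] (α : MulAut G) (V : Subgroup G) : Subgroup G where
  carrier := ⇑α '' (V : Set G)
  one_mem' := ⟨1, V.one_mem, map_one α⟩
  mul_mem' := by
    rintro a b ⟨a', ha, rfl⟩ ⟨b', hb, rfl⟩
    exact ⟨a' * b', V.mul_mem ha hb, map_mul α a' b'⟩
  inv_mem' := by
    rintro a ⟨a', ha, rfl⟩
    exact ⟨a'⁻¹, V.inv_mem ha, map_inv α a'⟩

/-- `V₊` as a subgroup. -/
def plusSub [Group G] (α : MulAut G) (V : Subgroup G) : Subgroup G :=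
  ⨅ k : ℕ, mapAut (α ^ k) V

/-- `V₋` as a subgroup. -/
def minusSub [Group G] (α : MulAut G) (V : Subgroup G) : Subgroup G :=
  ⨅ k : ℕ, mapAut (α⁻¹ ^ k) V

/-- The shift automorphism of `F^ℤ`. -/
def shiftAut (F : Type*) [Group F] : MulAut (ℤ → F) where
  toFun f := fun n => f (n + 1)
  invFun f := fun n => f (n - 1)
  left_inv f := by funext n; show f (n - 1 + 1) = f n; congr 1; omega
  right_inv f := by funext n; show f (n + 1 - 1) = f n; congr 1; omega
  map_mul' f g := rfl

section Aux
variable [Group G]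

@[simp] lemma coe_mapAut (β : MulAut G) (W : Subgroup G) :
    ((mapAut β W : Subgroup G) : Set G) = ⇑β '' (W : Set G) := rfl

lemma mem_mapAut {β : MulAut G} {W : Subgroup G} {x : G} :
    x ∈ mapAut β W ↔ β⁻¹ x ∈ W := by
  constructor
  · rintro ⟨v, hv, rfl⟩; simpa using hv
  · intro h; exact ⟨β⁻¹ x, h, by simp⟩

lemma mapAut_mapAut (β γ : MulAut G) (W : Subgroup G) :
    mapAut β (mapAut γ W) = mapAut (β * γ) W := by
  ext x; simp [mem_mapAut, mul_assoc]

lemma mapAut_mono {β : MulAut G} {W₁ W₂ : Subgroup G} (h : W₁ ≤ W₂) :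
    mapAut β W₁ ≤ mapAut β W₂ := by
  intro x hx; rw [mem_mapAut] at *; exact h hx

lemma mapAut_one (W : Subgroup G) : mapAut 1 W = W := by
  ext x; simp [mem_mapAut]

lemma mapAut_inf (β : MulAut G) (W₁ W₂ : Subgroup G) :
    mapAut β (W₁ ⊓ W₂) = mapAut β W₁ ⊓ mapAut β W₂ := by
  ext x; simp [mem_mapAut]

lemma mapAut_bot (β : MulAut G) : mapAut β (⊥ : Subgroup G) = ⊥ := by
  ext x; simp [mem_mapAut]

lemma mapAut_eq_map (β : MulAut G) (W : Subgroup G) :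
    mapAut β W = Subgroup.map β.toMonoidHom W := by
  ext x; rfl

lemma index_mapAut (β : MulAut G) (W : Subgroup G) :
    (mapAut β W).index = W.index := by
  rw [mapAut_eq_map]
  refine Subgroup.index_map_eq W β.surjective ?_
  intro x hx
  have hx1 : β.toMonoidHom x = 1 := hx
  have hx2 : x = 1 := β.injective (by simpa using hx1)
  exact hx2 ▸ W.one_mem

end Aux
section Aux2
variable [Group G]

lemma mem_set_mul_subgroups {P L : Subgroup G} {x : G} :
    x ∈ (P : Set G) * (L : Set G) ↔ ∃ p ∈ P, ∃ l ∈ L, p * l = x := by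
  simp [Set.mem_mul]

lemma relindex_eq_of_products (P K L S T : Subgroup G)
    (hLK : L ≤ K) (hPK : P ⊓ K = ⊥)
    (hS : (S : Set G) = (P : Set G) * (K : Set G))
    (hT : (T : Set G) = (P : Set G) * (L : Set G)) :
    T.relIndex S = L.relIndex K := by
  have hKS : K ≤ S := by
    intro k hk
    have : (k : G) ∈ (S : Set G) := by
      rw [hS]; exact mem_set_mul_subgroups.2 ⟨1, P.one_mem, k, hk, one_mul k⟩
    exact this
  have hPT : ∀ p : G, p ∈ P → p ∈ T := by
    intro p hp
    have : (p : G) ∈ (T : Set G) := by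
      rw [hT]; exact mem_set_mul_subgroups.2 ⟨p, hp, 1, L.one_mem, mul_one p⟩
    exact this
  have hTL : ∀ x : G, x ∈ K → x ∈ T → x ∈ L := by
    intro x hxK hxT
    have : (x : G) ∈ (T : Set G) := hxT
    rw [hT] at this
    obtain ⟨p, hp, l, hl, hpl⟩ := mem_set_mul_subgroups.1 this
    have hpK : p ∈ K := by
      have : p = x * l⁻¹ := by rw [← hpl]; group
      rw [this]; exact K.mul_mem hxK (K.inv_mem (hLK hl))
    have hp1 : p = 1 := by
      have : p ∈ P ⊓ K := ⟨hp, hpK⟩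
      rwa [hPK, Subgroup.mem_bot] at this
    rw [hp1, one_mul] at hpl
    rwa [← hpl]
  show (T.subgroupOf S).index = (L.subgroupOf K).index
  rw [Subgroup.index_eq_card, Subgroup.index_eq_card]
  apply Nat.card_congr
  apply Equiv.symm
  refine Equiv.ofBijective (Quotient.map' (fun k => Subgroup.inclusion hKS k) ?_) ⟨?_, ?_⟩
  · intro a b hab
    rw [QuotientGroup.leftRel_apply] at hab ⊢
    rw [Subgroup.mem_subgroupOf] at hab ⊢
    have hLT : ∀ l : G, l ∈ L → l ∈ T := by
      intro l hl
      have : (l : G) ∈ (T : Set G) := by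
        rw [hT]; exact mem_set_mul_subgroups.2 ⟨1, P.one_mem, l, hl, one_mul l⟩
      exact this
    have h1 : (((Subgroup.inclusion hKS) a)⁻¹ * (Subgroup.inclusion hKS) b : S) =
        ((a : G))⁻¹ * (b : G) := by
      push_cast [Subgroup.coe_inclusion]; rfl
    rw [h1]
    exact hLT _ (by exact_mod_cast hab)
  · -- injective
    intro q₁ q₂ h
    induction q₁ using Quotient.inductionOn'
    induction q₂ using Quotient.inductionOn'
    rename_i a b
    refine Quotient.sound' ?_
    have h2 := Quotient.exact' h
    rw [QuotientGroup.leftRel_apply] at h2 ⊢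
    rw [Subgroup.mem_subgroupOf] at h2 ⊢
    have h1 : (((Subgroup.inclusion hKS) a)⁻¹ * (Subgroup.inclusion hKS) b : S) =
        ((a : G))⁻¹ * (b : G) := by
      push_cast [Subgroup.coe_inclusion]; rfl
    rw [h1] at h2
    have hmem : ((a : G))⁻¹ * b ∈ K := K.mul_mem (K.inv_mem a.2) b.2
    exact_mod_cast hTL _ hmem h2
  · -- surjective
    intro q
    induction q using Quotient.inductionOn'
    rename_i s
    have hs : ((s : G))⁻¹ ∈ (S : Set G) := S.inv_mem s.2
    rw [hS] at hs
    obtain ⟨p, hp, k, hk, hpk⟩ := mem_set_mul_subgroups.1 hs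
    refine ⟨Quotient.mk'' ⟨k⁻¹, K.inv_mem hk⟩, ?_⟩
    refine Quotient.sound' ?_
    rw [QuotientGroup.leftRel_apply, Subgroup.mem_subgroupOf]
    have h1 : ((((Subgroup.inclusion hKS) (⟨k⁻¹, K.inv_mem hk⟩ : K))⁻¹ * s : S) : G) =
        k * (s : G) := by
      push_cast [Subgroup.coe_inclusion]; simp
    rw [h1]
    have hsval : (s : G) = k⁻¹ * p⁻¹ := by
      have : ((s : G))⁻¹ = p * k := hpk.symm
      calc (s : G) = (((s:G))⁻¹)⁻¹ := by group
        _ = (p * k)⁻¹ := by rw [this]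
        _ = k⁻¹ * p⁻¹ := by group
    rw [hsval]
    have : k * (k⁻¹ * p⁻¹) = p⁻¹ := by group
    rw [this]
    exact hPT _ (P.inv_mem hp)

end Aux2
section Aux3
variable [Group G] (α : MulAut G) (V : Subgroup G)

/-- The chain `S n = V ∩ α(V) ∩ ... ∩ αⁿ(V)` defined recursively. -/
def chainS : ℕ → Subgroup G
  | 0 => V
  | (n+1) => V ⊓ mapAut α (chainS n)

variable {α V}

lemma mapAut_zpow_mapAut_zpow (a b : ℤ) (W : Subgroup G) :
    mapAut (α ^ a) (mapAut (α ^ b) W) = mapAut (α ^ (a + b)) W := by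
  rw [mapAut_mapAut, ← zpow_add]

lemma mapAut_pow_eq_zpow (m : ℕ) (W : Subgroup G) :
    mapAut (α ^ m) W = mapAut (α ^ (m : ℤ)) W := by rw [zpow_natCast]

lemma mapAut_invpow_eq_zpow (m : ℕ) (W : Subgroup G) :
    mapAut (α⁻¹ ^ m) W = mapAut (α ^ (-(m : ℤ))) W := by
  rw [inv_pow, ← zpow_natCast, ← zpow_neg]

lemma mem_mapAut_zpow_plusSub {x : G} {n : ℤ} :
    x ∈ mapAut (α ^ n) (plusSub α V) ↔ ∀ k : ℤ, n ≤ k → x ∈ mapAut (α ^ k) V := by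
  rw [mem_mapAut]
  unfold plusSub
  rw [Subgroup.mem_iInf]
  constructor
  · intro h k hk
    obtain ⟨m, hm⟩ : ∃ m : ℕ, k = n + m := ⟨(k - n).toNat, by omega⟩
    have h2 := h m
    rw [mapAut_pow_eq_zpow] at h2
    rw [hm, ← mapAut_zpow_mapAut_zpow, mem_mapAut]
    exact h2
  · intro h m
    have h2 := h (n + m) (by omega)
    rw [mapAut_pow_eq_zpow, ← mem_mapAut (β := α ^ n), mapAut_zpow_mapAut_zpow]
    exact h2

lemma mem_mapAut_zpow_minusSub {x : G} {n : ℤ} :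
    x ∈ mapAut (α ^ n) (minusSub α V) ↔ ∀ k : ℤ, k ≤ n → x ∈ mapAut (α ^ k) V := by
  rw [mem_mapAut]
  unfold minusSub
  rw [Subgroup.mem_iInf]
  constructor
  · intro h k hk
    obtain ⟨m, hm⟩ : ∃ m : ℕ, k = n + -(m : ℤ) := ⟨(n - k).toNat, by omega⟩
    have h2 := h m
    rw [mapAut_invpow_eq_zpow] at h2
    rw [hm, ← mapAut_zpow_mapAut_zpow, mem_mapAut]
    exact h2
  · intro h m
    have h2 := h (n + -(m : ℤ)) (by omega)
    rw [mapAut_invpow_eq_zpow, ← mem_mapAut (β := α ^ n), mapAut_zpow_mapAut_zpow]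
    exact h2

lemma mem_plusSub_iff {x : G} :
    x ∈ plusSub α V ↔ ∀ k : ℤ, 0 ≤ k → x ∈ mapAut (α ^ k) V := by
  have := mem_mapAut_zpow_plusSub (α := α) (V := V) (x := x) (n := 0)
  rwa [zpow_zero, mapAut_one] at this

lemma mem_minusSub_iff {x : G} :
    x ∈ minusSub α V ↔ ∀ k : ℤ, k ≤ 0 → x ∈ mapAut (α ^ k) V := by
  have := mem_mapAut_zpow_minusSub (α := α) (V := V) (x := x) (n := 0)
  rwa [zpow_zero, mapAut_one] at this

end Aux3
section Aux4
variable [Group G] {α : MulAut G} {V : Subgroup G}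

lemma mem_mapAut_succ {W : Subgroup G} {x : G} {k : ℤ} :
    α⁻¹ x ∈ mapAut (α ^ k) W ↔ x ∈ mapAut (α ^ (k + 1)) W := by
  rw [mem_mapAut, mem_mapAut]
  have hcomm : ((α : MulAut G) ^ k)⁻¹ * α⁻¹ = (α ^ (k + 1))⁻¹ := by group
  rw [← MulAut.mul_apply, hcomm]

lemma plusSub_le_self : plusSub α V ≤ V := by
  intro x hx
  have := mem_plusSub_iff.1 hx 0 le_rfl
  rwa [zpow_zero, mapAut_one] at this

lemma mapAut_zpow_minusSub_le_self {n : ℤ} (hn : 0 ≤ n) :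
    mapAut (α ^ n) (minusSub α V) ≤ V := by
  intro x hx
  have := mem_mapAut_zpow_minusSub.1 hx 0 hn
  rwa [zpow_zero, mapAut_one] at this

lemma inv_mem_plusSub {x : G} (hx : x ∈ plusSub α V) : α⁻¹ x ∈ plusSub α V := by
  rw [mem_plusSub_iff] at hx ⊢
  intro k hk
  rw [mem_mapAut_succ]
  exact hx (k + 1) (by omega)

lemma plusSub_le_mapAut : plusSub α V ≤ mapAut α (plusSub α V) := by
  intro x hx
  rw [mem_mapAut]
  exact inv_mem_plusSub hx

/-- The key structural fact: `S n = V₊ · αⁿ(V₋)`. -/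
lemma mem_chainS_iff (hVta : (V : Set G) = (plusSub α V : Set G) * (minusSub α V : Set G))
    (n : ℕ) {x : G} :
    x ∈ chainS α V n ↔
      ∃ p ∈ plusSub α V, ∃ m ∈ mapAut (α ^ (n : ℤ)) (minusSub α V), p * m = x := by
  induction n generalizing x with
  | zero =>
    show x ∈ V ↔ _
    rw [Nat.cast_zero, zpow_zero, mapAut_one]
    constructor
    · intro hx
      have : x ∈ (V : Set G) := hx
      rw [hVta] at this
      exact mem_set_mul_subgroups.1 this
    · rintro ⟨p, hp, m, hm, rfl⟩
      have : (p * m : G) ∈ (V : Set G) := by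
        rw [hVta]; exact mem_set_mul_subgroups.2 ⟨p, hp, m, hm, rfl⟩
      exact this
  | succ n ih =>
    show x ∈ V ⊓ mapAut α (chainS α V n) ↔ _
    rw [Subgroup.mem_inf, mem_mapAut, ih]
    constructor
    · rintro ⟨hxV, p, hp, m, hm, hpm⟩
      refine ⟨α p, ?_, α m, ?_, ?_⟩
      · -- α p ∈ plusSub : α p ∈ V and α p ∈ α(plusSub)
        have hαm_mem : α m ∈ mapAut (α ^ ((n : ℤ) + 1)) (minusSub α V) := by
          rw [← mem_mapAut_succ]; simpa using hm
        have hαmV : α m ∈ V := mapAut_zpow_minusSub_le_self (by omega) hαm_mem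
        have hαpV : α p ∈ V := by
          have hx' : x = α p * α m := by
            rw [← map_mul]; rw [hpm]; simp
          have : α p = x * (α m)⁻¹ := by rw [hx']; group
          rw [this]; exact V.mul_mem hxV (V.inv_mem hαmV)
        rw [mem_plusSub_iff]
        intro k hk
        rcases eq_or_lt_of_le hk with h0 | hpos
        · rw [← h0, zpow_zero, mapAut_one]; exact hαpV
        · have hp' := mem_plusSub_iff.1 hp (k - 1) (by omega)
          have : α p ∈ mapAut (α ^ (k - 1 + 1)) V := by
            rw [← mem_mapAut_succ]; simpa using hp'
          simpa using this
      · push_cast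
        rw [← mem_mapAut_succ]
        simpa using hm
      · rw [← map_mul, hpm]; simp
    · rintro ⟨p, hp, m, hm, rfl⟩
      have hm' : α⁻¹ m ∈ mapAut (α ^ (n : ℤ)) (minusSub α V) := by
        rw [mem_mapAut_succ]
        push_cast at hm ⊢
        exact hm
      have hp' : α⁻¹ p ∈ plusSub α V := inv_mem_plusSub hp
      constructor
      · exact V.mul_mem (plusSub_le_self hp)
          (mapAut_zpow_minusSub_le_self (by omega) hm)
      · rw [map_mul]
        exact ⟨α⁻¹ p, hp', α⁻¹ m, hm', rfl⟩

lemma chainS_carrier (hVta : (V : Set G) = (plusSub α V : Set G) * (minusSub α V : Set G))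
    (n : ℕ) :
    (chainS α V n : Set G) =
      (plusSub α V : Set G) * (mapAut (α ^ (n : ℤ)) (minusSub α V) : Set G) := by
  ext x
  rw [Set.mem_mul]
  constructor
  · intro hx
    obtain ⟨p, hp, m, hm, hpm⟩ := (mem_chainS_iff hVta n).1 hx
    exact ⟨p, hp, m, hm, hpm⟩
  · rintro ⟨p, hp, m, hm, hpm⟩
    exact (mem_chainS_iff hVta n).2 ⟨p, hp, m, hm, hpm⟩

end Aux4
section Aux5
variable [Group G] {α : MulAut G} {V : Subgroup G}

lemma comap_mapAut (β : MulAut G) (H : Subgroup G) :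
    Subgroup.comap β.toMonoidHom (mapAut β H) = H := by
  ext x
  rw [Subgroup.mem_comap]
  show β x ∈ mapAut β H ↔ _
  rw [mem_mapAut]
  simp

lemma relindex_mapAut (β : MulAut G) (H K : Subgroup G) :
    (mapAut β H).relIndex (mapAut β K) = H.relIndex K := by
  conv_rhs => rw [← comap_mapAut β H]
  rw [Subgroup.relIndex_comap, ← mapAut_eq_map]

lemma coe_prod_comm {A B X : Subgroup G} (h : (X : Set G) = (A : Set G) * (B : Set G)) :
    (X : Set G) = (B : Set G) * (A : Set G) := by
  ext x
  constructor
  · intro hx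
    have hxi : x⁻¹ ∈ (X : Set G) := X.inv_mem hx
    rw [h] at hxi
    obtain ⟨a, ha, b, hb, hab⟩ := mem_set_mul_subgroups.1 hxi
    refine mem_set_mul_subgroups.2 ⟨b⁻¹, B.inv_mem hb, a⁻¹, A.inv_mem ha, ?_⟩
    rw [← mul_inv_rev, hab, inv_inv]
  · intro hx
    obtain ⟨b, hb, a, ha, hab⟩ := mem_set_mul_subgroups.1 hx
    have : x⁻¹ ∈ (X : Set G) := by
      rw [h]
      refine mem_set_mul_subgroups.2 ⟨a⁻¹, A.inv_mem ha, b⁻¹, B.inv_mem hb, ?_⟩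
      rw [← mul_inv_rev, hab]
    have := X.inv_mem this
    rwa [inv_inv] at this

section WithHyp
variable (htriv : ∀ x : G, (∀ k : ℤ, x ∈ mapAut (α ^ k) V) → x = 1)
variable (hVta : (V : Set G) = (plusSub α V : Set G) * (minusSub α V : Set G))

include htriv in
lemma plus_inf_mapAut_minus_eq_bot {n : ℤ} (hn : 0 ≤ n) :
    plusSub α V ⊓ mapAut (α ^ n) (minusSub α V) = ⊥ := by
  rw [eq_bot_iff]
  rintro x ⟨hxp, hxm⟩
  have hx1 : x = 1 := by
    apply htriv
    intro k
    rcases le_or_gt 0 k with hk | hk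
    · exact mem_plusSub_iff.1 hxp k hk
    · exact mem_mapAut_zpow_minusSub.1 hxm k (by omega)
  simp [hx1]

lemma chainS_le_of_le : ∀ n : ℕ, chainS α V (n + 1) ≤ chainS α V n := by
  intro n
  induction n with
  | zero => exact inf_le_left
  | succ n ih => exact inf_le_inf le_rfl (mapAut_mono ih)

include htriv hVta in
lemma relindex_chainS_succ (n : ℕ) :
    (chainS α V (n + 1)).relIndex (chainS α V n) =
      (mapAut α (minusSub α V)).relIndex (minusSub α V) := by
  have key := relindex_eq_of_products (plusSub α V)
    (mapAut (α ^ (n : ℤ)) (minusSub α V))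
    (mapAut (α ^ ((n + 1 : ℕ) : ℤ)) (minusSub α V))
    (chainS α V n) (chainS α V (n + 1))
    (by
      intro x hx
      rw [mem_mapAut_zpow_minusSub] at hx ⊢
      intro k hk
      exact hx k (by push_cast at hk ⊢; omega))
    (plus_inf_mapAut_minus_eq_bot htriv (by positivity))
    (chainS_carrier hVta n)
    (chainS_carrier hVta (n + 1))
  rw [key]
  have h1 : mapAut (α ^ ((n + 1 : ℕ) : ℤ)) (minusSub α V) =
      mapAut (α ^ (n : ℤ)) (mapAut (α ^ (1 : ℤ)) (minusSub α V)) := by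
    rw [mapAut_zpow_mapAut_zpow]
    have hc : ((n + 1 : ℕ) : ℤ) = (n : ℤ) + 1 := by push_cast; ring
    rw [hc]
  rw [h1, relindex_mapAut, zpow_one]

include htriv hVta in
lemma relindex_chainS_one_mapAutV :
    (chainS α V 1).relIndex (mapAut α V) =
      (plusSub α V).relIndex (mapAut α (plusSub α V)) := by
  have hbot : mapAut α (minusSub α V) ⊓ mapAut α (plusSub α V) = ⊥ := by
    rw [← mapAut_inf, inf_comm]
    have h0 := plus_inf_mapAut_minus_eq_bot (V := V) htriv (n := 0) le_rfl
    rw [zpow_zero, mapAut_one] at h0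
    rw [h0, mapAut_bot]
  have hS : ((mapAut α V : Subgroup G) : Set G) =
      (mapAut α (minusSub α V) : Set G) * (mapAut α (plusSub α V) : Set G) := by
    apply coe_prod_comm
    show ⇑α '' (V : Set G) = _
    rw [hVta, Set.image_mul]
    rfl
  have hT : ((chainS α V 1 : Subgroup G) : Set G) =
      (mapAut α (minusSub α V) : Set G) * (plusSub α V : Set G) := by
    apply coe_prod_comm
    have := chainS_carrier hVta (V := V) 1
    rwa [Nat.cast_one, zpow_one] at this
  exact relindex_eq_of_products (mapAut α (minusSub α V)) (mapAut α (plusSub α V))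
    (plusSub α V) (mapAut α V) (chainS α V 1) plusSub_le_mapAut hbot hS hT

end WithHyp
end Aux5
section Aux6
variable [Group G] {α : MulAut G} {V : Subgroup G}

@[simp] lemma chainS_zero : chainS α V 0 = V := rfl

lemma chainS_succ (n : ℕ) : chainS α V (n + 1) = V ⊓ mapAut α (chainS α V n) := rfl

/-- The two-sided chain `W n = α⁻ⁿ(V) ∩ ... ∩ αⁿ(V)`. -/
def chainW (α : MulAut G) (V : Subgroup G) (n : ℕ) : Subgroup G :=
  mapAut (α ^ (-(n : ℤ))) (chainS α V (2 * n))

lemma chainW_zero : chainW α V 0 = V := by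
  show mapAut (α ^ (-(0:ℕ) : ℤ)) (chainS α V 0) = V
  norm_num
  rw [mapAut_one]

lemma mem_mapAut_zpow_shift {W : Subgroup G} {x : G} {a b : ℤ} :
    (α ^ a)⁻¹ x ∈ mapAut (α ^ b) W ↔ x ∈ mapAut (α ^ (a + b)) W := by
  rw [← mem_mapAut (β := α ^ a), mapAut_zpow_mapAut_zpow]

lemma mem_chainS_iff' {x : G} (n : ℕ) :
    x ∈ chainS α V n ↔ ∀ j : ℤ, 0 ≤ j → j ≤ (n : ℤ) → x ∈ mapAut (α ^ j) V := by
  induction n generalizing x with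
  | zero =>
    constructor
    · intro hx j h0 hn
      have hj : j = 0 := by omega
      subst hj
      rw [zpow_zero, mapAut_one]
      exact hx
    · intro h
      have := h 0 le_rfl le_rfl
      rwa [zpow_zero, mapAut_one] at this
  | succ n ih =>
    rw [chainS_succ, Subgroup.mem_inf, mem_mapAut, ih]
    constructor
    · rintro ⟨hxV, h⟩ j h0 hn
      rcases eq_or_lt_of_le h0 with h0' | h0'
      · rw [← h0', zpow_zero, mapAut_one]; exact hxV
      · have := h (j - 1) (by omega) (by push_cast at hn ⊢; omega)
        rw [mem_mapAut_succ] at this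
        simpa using this
    · intro h
      constructor
      · have := h 0 le_rfl (by positivity)
        rwa [zpow_zero, mapAut_one] at this
      · intro j h0 hn
        rw [mem_mapAut_succ]
        exact h (j + 1) (by omega) (by push_cast at hn ⊢; omega)

lemma mem_chainW_iff {x : G} {n : ℕ} :
    x ∈ chainW α V n ↔ ∀ k : ℤ, -(n : ℤ) ≤ k → k ≤ (n : ℤ) → x ∈ mapAut (α ^ k) V := by
  show x ∈ mapAut (α ^ (-(n : ℤ))) (chainS α V (2 * n)) ↔ _
  rw [mem_mapAut, mem_chainS_iff' (2 * n)]
  constructor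
  · intro h k h1 h2
    have := h (k + n) (by omega) (by push_cast; omega)
    rw [mem_mapAut_zpow_shift] at this
    rwa [show -(n : ℤ) + (k + n) = k by ring] at this
  · intro h j h0 hn
    rw [mem_mapAut_zpow_shift]
    exact h (-(n : ℤ) + j) (by omega) (by push_cast at hn ⊢; omega)

lemma chainW_antitone {m n : ℕ} (h : m ≤ n) : chainW α V n ≤ chainW α V m := by
  intro x hx
  rw [mem_chainW_iff] at hx ⊢
  intro k h1 h2
  exact hx k (by omega) (by omega)

lemma eq_one_of_mem_all_chainW
    (htriv : ∀ x : G, (∀ k : ℤ, x ∈ mapAut (α ^ k) V) → x = 1)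
    {x : G} (h : ∀ n : ℕ, x ∈ chainW α V n) : x = 1 := by
  apply htriv
  intro k
  exact mem_chainW_iff.1 (h k.natAbs) k (by omega) (by omega)

lemma chainW_le_chainW {V' : Subgroup G} {N : ℕ} (hW : chainW α V N ≤ V') (n : ℕ) :
    chainW α V (n + N) ≤ chainW α V' n := by
  intro x hx
  rw [mem_chainW_iff] at hx ⊢
  intro k h1 h2
  have hx' : x ∈ mapAut (α ^ k) (chainW α V N) := by
    rw [mem_mapAut, mem_chainW_iff]
    intro j hj1 hj2
    rw [mem_mapAut_zpow_shift]
    exact hx (k + j) (by push_cast at h1 h2 ⊢; omega) (by push_cast at h1 h2 ⊢; omega)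
  exact mapAut_mono hW hx'

end Aux6
section Aux7
variable [Group G] {α : MulAut G} {V : Subgroup G}

section Cont
variable [TopologicalSpace G]
variable (hαc : Continuous ⇑α) (hαc' : Continuous ⇑(α⁻¹))

include hαc in
lemma continuous_mulAut_pow (n : ℕ) : Continuous ⇑(α ^ n) := by
  induction n with
  | zero => simpa using continuous_id
  | succ n ih =>
    rw [pow_succ]
    have : ⇑(α ^ n * α) = ⇑(α ^ n) ∘ ⇑α := rfl
    rw [this]
    exact ih.comp hαc

include hαc' in
lemma continuous_mulAut_invpow (n : ℕ) : Continuous ⇑(α⁻¹ ^ n) := by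
  induction n with
  | zero => simpa using continuous_id
  | succ n ih =>
    rw [pow_succ]
    have : ⇑(α⁻¹ ^ n * α⁻¹) = ⇑(α⁻¹ ^ n) ∘ ⇑α⁻¹ := rfl
    rw [this]
    exact ih.comp hαc'

include hαc hαc' in
lemma continuous_mulAut_zpow (k : ℤ) : Continuous ⇑(α ^ k) := by
  rcases k with n | n
  · rw [Int.ofNat_eq_coe, zpow_natCast]
    exact continuous_mulAut_pow hαc n
  · rw [zpow_negSucc, ← inv_pow]
    exact continuous_mulAut_invpow hαc' (n + 1)

include hαc hαc' in
lemma isOpen_mapAut_zpow {W : Subgroup G} (hW : IsOpen (W : Set G)) (k : ℤ) :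
    IsOpen ((mapAut (α ^ k) W : Subgroup G) : Set G) := by
  have hset : ((mapAut (α ^ k) W : Subgroup G) : Set G) = ⇑(α ^ (-k)) ⁻¹' (W : Set G) := by
    ext x
    rw [Set.mem_preimage]
    show x ∈ mapAut (α ^ k) W ↔ _
    rw [mem_mapAut, zpow_neg]
    rfl
  rw [hset]
  exact hW.preimage (continuous_mulAut_zpow hαc hαc' (-k))

include hαc hαc' in
lemma isOpen_chainS (hVo : IsOpen (V : Set G)) (n : ℕ) :
    IsOpen ((chainS α V n : Subgroup G) : Set G) := by
  induction n with
  | zero => exact hVo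
  | succ n ih =>
    rw [chainS_succ, Subgroup.coe_inf]
    refine hVo.inter ?_
    have h1 : mapAut α (chainS α V n) = mapAut (α ^ (1 : ℤ)) (chainS α V n) := by
      rw [zpow_one]
    rw [h1]
    exact isOpen_mapAut_zpow hαc hαc' ih 1

include hαc hαc' in
lemma isOpen_chainW (hVo : IsOpen (V : Set G)) (n : ℕ) :
    IsOpen ((chainW α V n : Subgroup G) : Set G) :=
  isOpen_mapAut_zpow hαc hαc' (isOpen_chainS hαc hαc' hVo (2 * n)) _

end Cont

section Index
variable (htriv : ∀ x : G, (∀ k : ℤ, x ∈ mapAut (α ^ k) V) → x = 1)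
variable (hVta : (V : Set G) = (plusSub α V : Set G) * (minusSub α V : Set G))
variable (hVfin : V.index ≠ 0)

include htriv hVta hVfin in
lemma minus_relindex_eq_plus_relindex :
    (mapAut α (minusSub α V)).relIndex (minusSub α V) =
      (plusSub α V).relIndex (mapAut α (plusSub α V)) := by
  have h1 : (chainS α V 1).relIndex (chainS α V 0) * (chainS α V 0).index =
      (chainS α V 1).index := Subgroup.relIndex_mul_index (chainS_le_of_le 0)
  have h2 : (chainS α V 1).relIndex (mapAut α V) * (mapAut α V).index =
      (chainS α V 1).index := by
    refine Subgroup.relIndex_mul_index ?_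
    rw [chainS_succ]
    have : mapAut α (chainS α V 0) = mapAut α V := by rw [chainS_zero]
    rw [this]
    exact inf_le_right
  rw [relindex_chainS_succ htriv hVta 0, chainS_zero] at h1
  rw [relindex_chainS_one_mapAutV htriv hVta, index_mapAut] at h2
  have := h1.trans h2.symm
  exact Nat.eq_of_mul_eq_mul_right (Nat.pos_of_ne_zero hVfin) this

include htriv hVta hVfin in
lemma index_chainS_eq (n : ℕ) :
    (chainS α V n).index =
      V.index * ((plusSub α V).relIndex (mapAut α (plusSub α V))) ^ n := by
  induction n with
  | zero => simp
  | succ n ih =>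
    have h1 : (chainS α V (n + 1)).relIndex (chainS α V n) * (chainS α V n).index =
        (chainS α V (n + 1)).index := Subgroup.relIndex_mul_index (chainS_le_of_le n)
    rw [relindex_chainS_succ htriv hVta n,
      minus_relindex_eq_plus_relindex htriv hVta hVfin, ih] at h1
    rw [← h1, pow_succ]
    ring

include htriv hVta hVfin in
lemma index_chainW_eq (n : ℕ) :
    (chainW α V n).index =
      V.index * ((plusSub α V).relIndex (mapAut α (plusSub α V))) ^ (2 * n) := by
  show (mapAut (α ^ (-(n : ℤ))) (chainS α V (2 * n))).index = _
  rw [index_mapAut]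
  exact index_chainS_eq htriv hVta hVfin (2 * n)

end Index
end Aux7
section Aux8
variable [Group G] {α : MulAut G} {V : Subgroup G}

lemma le_of_forall_mul_pow_le {a b s s' : ℕ} (hb : b ≠ 0) (hs : 1 ≤ s)
    (h : ∀ n : ℕ, b * s' ^ n ≤ a * s ^ n) : s' ≤ s := by
  by_contra hc
  push_neg at hc
  have hspos : (0 : ℝ) < (s : ℝ) := by exact_mod_cast hs
  have hr : (1 : ℝ) < (s' : ℝ) / (s : ℝ) := by
    rw [lt_div_iff₀ hspos, one_mul]
    exact_mod_cast hc
  have htend := tendsto_pow_atTop_atTop_of_one_lt hr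
  obtain ⟨n, hn⟩ := (htend.eventually_gt_atTop ((a : ℝ))).exists
  have hb1 : (1 : ℝ) ≤ (b : ℝ) := by exact_mod_cast Nat.one_le_iff_ne_zero.2 hb
  have hineq : (s' : ℝ) ^ n ≤ (a : ℝ) * (s : ℝ) ^ n := by
    have hnat := h n
    have h2 : ((b * s' ^ n : ℕ) : ℝ) ≤ ((a * s ^ n : ℕ) : ℝ) := by exact_mod_cast hnat
    push_cast at h2
    nlinarith [pow_nonneg (show (0:ℝ) ≤ (s':ℝ) by positivity) n]
  have hsn : (0 : ℝ) < (s : ℝ) ^ n := by positivity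
  have hle : ((s' : ℝ) / (s : ℝ)) ^ n ≤ (a : ℝ) := by
    rw [div_pow, div_le_iff₀ hsn]
    linarith
  linarith

variable [TopologicalSpace G] [IsTopologicalGroup G] [CompactSpace G]

lemma index_ne_zero_of_isOpen {W : Subgroup G} (hW : IsOpen (W : Set G)) : W.index ≠ 0 := by
  have : Finite (G ⧸ W) := W.quotient_finite_of_isOpen hW
  exact Subgroup.index_ne_zero_of_finite

variable (hαc : Continuous ⇑α) (hαc' : Continuous ⇑(α⁻¹))
variable (htriv : ∀ x : G, (∀ k : ℤ, x ∈ mapAut (α ^ k) V) → x = 1)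
variable (hVta : (V : Set G) = (plusSub α V : Set G) * (minusSub α V : Set G))
variable (hVo : IsOpen (V : Set G))

include hαc hαc' htriv hVta hVo in
lemma two_le_s [Infinite G] :
    2 ≤ (plusSub α V).relIndex (mapAut α (plusSub α V)) := by
  set s := (plusSub α V).relIndex (mapAut α (plusSub α V)) with hs
  have hVfin : V.index ≠ 0 := index_ne_zero_of_isOpen hVo
  have hs0 : s ≠ 0 := by
    intro h0
    have h1 := index_chainS_eq htriv hVta hVfin 1
    rw [← hs, h0] at h1
    simp at h1
    exact index_ne_zero_of_isOpen (isOpen_chainS hαc hαc' hVo 1) h1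
  have hs1 : s ≠ 1 := by
    intro h1
    have hWidx : ∀ n : ℕ, (chainW α V n).index = V.index := by
      intro n
      rw [index_chainW_eq htriv hVta hVfin n, ← hs, h1, one_pow, mul_one]
    have hVle : ∀ n : ℕ, V ≤ chainW α V n := by
      intro n
      have hle : chainW α V n ≤ V := by
        have := chainW_antitone (α := α) (V := V) (Nat.zero_le n)
        rwa [chainW_zero] at this
      have := Subgroup.relIndex_mul_index hle
      rw [hWidx n] at this
      have hrel : (chainW α V n).relIndex V = 1 := by
        have := Nat.eq_of_mul_eq_mul_right (Nat.pos_of_ne_zero hVfin)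
          (this.trans (one_mul V.index).symm)
        exact this
      exact Subgroup.relIndex_eq_one.1 hrel
    have hV1' : (V : Set G) = {1} := by
      apply Set.eq_singleton_iff_unique_mem.2
      refine ⟨V.one_mem, ?_⟩
      intro x hx
      exact eq_one_of_mem_all_chainW htriv (fun n => hVle n hx)
    have hopen1 : IsOpen ({1} : Set G) := hV1' ▸ hVo
    have : DiscreteTopology G := discreteTopology_of_isOpen_singleton_one hopen1
    have : Finite G := finite_of_compact_of_discrete
    exact absurd this (Infinite.not_finite)
  omega

include hαc hαc' htriv hVo in
lemma exists_chainW_le {V' : Subgroup G} (hV'o : IsOpen (V' : Set G)) :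
    ∃ N : ℕ, chainW α V N ≤ V' := by
  by_contra hcon
  push_neg at hcon
  set t : ℕ → Set G := fun n => (chainW α V n : Set G) ∩ (V' : Set G)ᶜ with ht
  have htn : ∀ n, (t n).Nonempty := by
    intro n
    obtain ⟨x, hx, hx'⟩ := SetLike.not_le_iff_exists.1 (hcon n)
    exact ⟨x, hx, hx'⟩
  have htcl : ∀ n, IsClosed (t n) := by
    intro n
    exact ((chainW α V n).isClosed_of_isOpen (isOpen_chainW hαc hαc' hVo n)).inter
      (isClosed_compl_iff.2 hV'o)
  have htc : ∀ n, IsCompact (t n) := fun n => (htcl n).isCompact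
  have htd : Directed (· ⊇ ·) t := by
    intro m n
    refine ⟨max m n, ?_, ?_⟩
    · exact Set.inter_subset_inter_left _ (chainW_antitone (le_max_left m n))
    · exact Set.inter_subset_inter_left _ (chainW_antitone (le_max_right m n))
  obtain ⟨x, hx⟩ := IsCompact.nonempty_iInter_of_directed_nonempty_isCompact_isClosed
    t htd htn htc htcl
  rw [Set.mem_iInter] at hx
  have hx1 : x = 1 := eq_one_of_mem_all_chainW htriv (fun n => (hx n).1)
  have := (hx 0).2
  rw [hx1] at this
  exact this V'.one_mem

end Aux8
section Main
variable [Group G] [TopologicalSpace G] [IsTopologicalGroup G] [CompactSpace G]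

lemma depth_le {α : MulAut G} (hαc : Continuous ⇑α) (hαc' : Continuous ⇑(α⁻¹))
    {V V' : Subgroup G} (hVo : IsOpen (V : Set G)) (hV'o : IsOpen (V' : Set G))
    (htriv : ∀ x : G, (∀ k : ℤ, x ∈ mapAut (α ^ k) V) → x = 1)
    (hVta : (V : Set G) = (plusSub α V : Set G) * (minusSub α V : Set G))
    (hV'ta : (V' : Set G) = (plusSub α V' : Set G) * (minusSub α V' : Set G))
    (htriv' : ∀ x : G, (∀ k : ℤ, x ∈ mapAut (α ^ k) V') → x = 1)
    (h1s : 1 ≤ (plusSub α V).relIndex (mapAut α (plusSub α V))) :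
    (plusSub α V').relIndex (mapAut α (plusSub α V')) ≤
      (plusSub α V).relIndex (mapAut α (plusSub α V)) := by
  set s := (plusSub α V).relIndex (mapAut α (plusSub α V)) with hs
  set s' := (plusSub α V').relIndex (mapAut α (plusSub α V')) with hs'
  have hVfin : V.index ≠ 0 := index_ne_zero_of_isOpen hVo
  have hV'fin : V'.index ≠ 0 := index_ne_zero_of_isOpen hV'o
  obtain ⟨N, hN⟩ := exists_chainW_le hαc hαc' htriv hVo hV'o
  have hidx : ∀ n : ℕ, (chainW α V' n).index ≤ (chainW α V (n + N)).index := by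
    intro n
    refine Nat.le_of_dvd ?_ (Subgroup.index_dvd_of_le (chainW_le_chainW hN n))
    exact Nat.pos_of_ne_zero
      (index_ne_zero_of_isOpen (isOpen_chainW hαc hαc' hVo (n + N)))
  have hsq : s' ^ 2 ≤ s ^ 2 := by
    apply le_of_forall_mul_pow_le (a := V.index * s ^ (2 * N)) (b := V'.index) hV'fin
      (Nat.one_le_pow _ _ (by omega))
    intro n
    have h1 := hidx n
    rw [index_chainW_eq htriv hVta hVfin (n + N),
      index_chainW_eq htriv' hV'ta hV'fin n, ← hs, ← hs'] at h1
    rw [show 2 * (n + N) = 2 * N + 2 * n by ring, pow_add] at h1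
    rw [show s' ^ (2 * n) = (s' ^ 2) ^ n by rw [pow_mul],
      show s ^ (2 * n) = (s ^ 2) ^ n by rw [pow_mul]] at h1
    rw [mul_assoc]
    exact h1
  by_contra hcon
  push_neg at hcon
  exact absurd hsq (not_le.2 (Nat.pow_lt_pow_left hcon (by norm_num)))

end Main

/-- For an infinite compact `G`, the index `[α(V₊) : V₊]` is finite,
strictly greater than 1, and independent of the choice of `V` with `⋂ α^k(V) = 1` and
`V = V₊V₋`. -/
theorem depth_well_defined
    [Group G] [TopologicalSpace G] [IsTopologicalGroup G] [T2Space G]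
    [TotallyDisconnectedSpace G] [CompactSpace G] [Infinite G]
    (α : MulAut G) (hαc : Continuous ⇑α) (hαc' : Continuous ⇑(α⁻¹))
    (V V' : Subgroup G)
    (hVo : IsOpen (V : Set G)) (hV'o : IsOpen (V' : Set G))
    (hV1 : (⋂ k : ℤ, ⇑(α ^ k) '' (V : Set G)) = ({1} : Set G))
    (hV'1 : (⋂ k : ℤ, ⇑(α ^ k) '' (V' : Set G)) = ({1} : Set G))
    (hVta : (V : Set G) = (plusSub α V : Set G) * (minusSub α V : Set G))
    (hV'ta : (V' : Set G) = (plusSub α V' : Set G) * (minusSub α V' : Set G)) :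
    1 < (plusSub α V).relIndex (mapAut α (plusSub α V)) ∧
    (plusSub α V).relIndex (mapAut α (plusSub α V)) =
      (plusSub α V').relIndex (mapAut α (plusSub α V')) := by
  have htriv : ∀ x : G, (∀ k : ℤ, x ∈ mapAut (α ^ k) V) → x = 1 := by
    intro x h
    have hx : x ∈ ⋂ k : ℤ, ⇑(α ^ k) '' (V : Set G) := by
      refine Set.mem_iInter.2 (fun k => ?_)
      rw [← coe_mapAut]
      exact h k
    rw [hV1] at hx
    exact hx
  have htriv' : ∀ x : G, (∀ k : ℤ, x ∈ mapAut (α ^ k) V') → x = 1 := by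
    intro x h
    have hx : x ∈ ⋂ k : ℤ, ⇑(α ^ k) '' (V' : Set G) := by
      refine Set.mem_iInter.2 (fun k => ?_)
      rw [← coe_mapAut]
      exact h k
    rw [hV'1] at hx
    exact hx
  have h2s : 2 ≤ (plusSub α V).relIndex (mapAut α (plusSub α V)) :=
    two_le_s hαc hαc' htriv hVta hVo
  have h2s' : 2 ≤ (plusSub α V').relIndex (mapAut α (plusSub α V')) :=
    two_le_s hαc hαc' htriv' hV'ta hV'o
  refine ⟨by omega, le_antisymm ?_ ?_⟩
  · exact depth_le hαc hαc' hV'o hVo htriv' hV'ta hVta htriv (by omega)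
  · exact depth_le hαc hαc' hVo hV'o htriv hVta hV'ta htriv' (by omega)
end

section
/- Let G be a compact, Hausdorff, totally disconnected topological group and α a topological group automorphism of G. Suppose V is an open normal subgroup of G with ⋂_{k∈ℤ} α^k(V) = {1}. Then for every i, j ∈ ℤ the subgroup α^i(V₊) ∩ α^j(V₋) is a finite normal subgroup of G. -/
open Pointwise Filter Topology

variable {G : Type*}

private lemma memAutImage [Group G] (β : MulAut G) (s : Set G) (x : G) :
    x ∈ ⇑β '' s ↔ β⁻¹ x ∈ s := by
  constructor
  · rintro ⟨y, hy, rfl⟩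
    simpa using hy
  · intro h
    exact ⟨β⁻¹ x, h, by simp⟩

private lemma apply_zpow_add [Group G] (α : MulAut G) (a b : ℤ) (x : G) :
    (α ^ (a + b)) x = (α ^ a) ((α ^ b) x) := by
  rw [zpow_add, MulAut.mul_apply]

private lemma mem_plus_iff [Group G] (α : MulAut G) (V : Subgroup G) (i : ℤ) (x : G) :
    x ∈ mapAut (α ^ i) (plusSub α V) ↔ ∀ m : ℤ, i ≤ m → (α ^ (-m)) x ∈ V := by
  have h1 : x ∈ mapAut (α ^ i) (plusSub α V) ↔ (α ^ i)⁻¹ x ∈ plusSub α V :=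
    memAutImage _ _ _
  have h2 : (α ^ i)⁻¹ x ∈ plusSub α V ↔
      ∀ k : ℕ, ((α ^ k : MulAut G))⁻¹ ((α ^ i)⁻¹ x) ∈ V := by
    rw [plusSub, Subgroup.mem_iInf]
    exact forall_congr' fun k => memAutImage _ _ _
  have key : ∀ k : ℕ, ((α ^ k : MulAut G))⁻¹ ((α ^ i)⁻¹ x) = (α ^ (-(i + (k : ℤ)))) x := by
    intro k
    have : ((α ^ k : MulAut G))⁻¹ ((α ^ i)⁻¹ x) = (α ^ (-(k : ℤ))) ((α ^ (-i)) x) := by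
      rw [zpow_neg, zpow_neg, zpow_natCast]
    rw [this, ← apply_zpow_add, show -(k : ℤ) + -i = -(i + (k : ℤ)) by omega]
  rw [h1, h2]
  constructor
  · intro h m hm
    have hk := h (m - i).toNat
    rw [key] at hk
    have : i + ((m - i).toNat : ℤ) = m := by omega
    rwa [this] at hk
  · intro h k
    rw [key]
    exact h _ (by omega)

private lemma mem_minus_iff [Group G] (α : MulAut G) (V : Subgroup G) (j : ℤ) (x : G) :
    x ∈ mapAut (α ^ j) (minusSub α V) ↔ ∀ m : ℤ, m ≤ j → (α ^ (-m)) x ∈ V := by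
  have h1 : x ∈ mapAut (α ^ j) (minusSub α V) ↔ (α ^ j)⁻¹ x ∈ minusSub α V :=
    memAutImage _ _ _
  have h2 : (α ^ j)⁻¹ x ∈ minusSub α V ↔
      ∀ k : ℕ, ((α⁻¹ ^ k : MulAut G))⁻¹ ((α ^ j)⁻¹ x) ∈ V := by
    rw [minusSub, Subgroup.mem_iInf]
    exact forall_congr' fun k => memAutImage _ _ _
  have key : ∀ k : ℕ, ((α⁻¹ ^ k : MulAut G))⁻¹ ((α ^ j)⁻¹ x) = (α ^ (-(j - (k : ℤ)))) x := by
    intro k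
    have : ((α⁻¹ ^ k : MulAut G))⁻¹ ((α ^ j)⁻¹ x) = (α ^ ((k : ℤ))) ((α ^ (-j)) x) := by
      rw [zpow_neg, inv_pow, inv_inv, zpow_natCast]
    rw [this, ← apply_zpow_add, show (k : ℤ) + -j = -(j - (k : ℤ)) by omega]
  rw [h1, h2]
  constructor
  · intro h m hm
    have hk := h (j - m).toNat
    rw [key] at hk
    have : j - ((j - m).toNat : ℤ) = m := by omega
    rwa [this] at hk
  · intro h k
    rw [key]
    exact h _ (by omega)

/-- If `V` is an open normal subgroup of the compact group `G` with
`⋂_{k ∈ ℤ} α^k(V) = 1`, then `α^i(V₊) ∩ α^j(V₋)` is a finite normal subgroup of `G`. -/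
theorem plus_inter_minus_finite_normal
    [Group G] [TopologicalSpace G] [IsTopologicalGroup G] [T2Space G]
    [TotallyDisconnectedSpace G] [CompactSpace G]
    (α : MulAut G) (hαc : Continuous ⇑α) (hαc' : Continuous ⇑(α⁻¹))
    (V : Subgroup G) [V.Normal] (hVo : IsOpen (V : Set G))
    (hV1 : (⋂ k : ℤ, ⇑(α ^ k) '' (V : Set G)) = ({1} : Set G)) :
    ∀ i j : ℤ,
      ((mapAut (α ^ i) (plusSub α V) ⊓ mapAut (α ^ j) (minusSub α V) : Subgroup G) :
        Set G).Finite ∧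
      (mapAut (α ^ i) (plusSub α V) ⊓ mapAut (α ^ j) (minusSub α V)).Normal := by
  intro i j
  classical
  set W : Subgroup G := mapAut (α ^ i) (plusSub α V) ⊓ mapAut (α ^ j) (minusSub α V) with hW
  have hmem : ∀ x : G, x ∈ W ↔ ∀ m : ℤ, (i ≤ m ∨ m ≤ j) → (α ^ (-m)) x ∈ V := by
    intro x
    rw [hW, Subgroup.mem_inf, mem_plus_iff, mem_minus_iff]
    constructor
    · rintro ⟨h1, h2⟩ m (hm | hm)
      · exact h1 m hm
      · exact h2 m hm
    · intro h
      exact ⟨fun m hm => h m (Or.inl hm), fun m hm => h m (Or.inr hm)⟩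
  -- triviality of the full intersection
  have htriv : ∀ x : G, (∀ m : ℤ, (α ^ (-m)) x ∈ V) → x = 1 := by
    intro x hx
    have hx' : x ∈ ⋂ k : ℤ, ⇑(α ^ k) '' (V : Set G) := by
      refine Set.mem_iInter.2 fun k => (memAutImage _ _ _).2 ?_
      have := hx k
      rwa [zpow_neg] at this
    rw [hV1] at hx'
    exact hx'
  -- continuity of all integer powers
  have hcont : ∀ m : ℤ, Continuous ⇑(α ^ m) := by
    intro m
    induction m using Int.induction_on with
    | zero => simpa using continuous_id
    | succ k ih =>
        have h : (α ^ ((k : ℤ) + 1)) = α ^ (k : ℤ) * α := by rw [zpow_add_one]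
        rw [h, MulAut.coe_mul]
        exact ih.comp hαc
    | pred k ih =>
        have h : (α ^ (-(k : ℤ) - 1)) = α ^ (-(k : ℤ)) * α⁻¹ := by rw [zpow_sub_one]
        rw [h, MulAut.coe_mul]
        exact ih.comp hαc'
  have hVc : IsClosed (V : Set G) := V.isClosed_of_isOpen hVo
  -- W is closed, hence compact
  have hWset : (W : Set G) =
      ⋂ m : ℤ, ⋂ (_ : i ≤ m ∨ m ≤ j), ⇑(α ^ (-m)) ⁻¹' (V : Set G) := by
    ext x
    simp only [SetLike.mem_coe, hmem, Set.mem_iInter, Set.mem_preimage]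
  have hWclosed : IsClosed (W : Set G) := by
    rw [hWset]
    exact isClosed_iInter fun m => isClosed_iInter fun _ => hVc.preimage (hcont _)
  have hWcompact : IsCompact (W : Set G) := hWclosed.isCompact
  -- the open subgroup-like neighborhood N
  set N : Set G := ⋂ m ∈ Finset.Ico (j + 1) i, ⇑(α ^ (-m)) ⁻¹' (V : Set G) with hN
  have hNopen : IsOpen N :=
    isOpen_biInter_finset fun m _ => hVo.preimage (hcont _)
  have hN1 : (1 : G) ∈ N := by
    refine Set.mem_iInter₂.2 fun m _ => ?_
    simp [Set.mem_preimage, V.one_mem]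
  have hkey : ∀ x ∈ W, x ∈ N → x = 1 := by
    intro x hxW hxN
    refine htriv x fun m => ?_
    by_cases hm : i ≤ m ∨ m ≤ j
    · exact (hmem x).1 hxW m hm
    · push_neg at hm
      exact Set.mem_iInter₂.1 hxN m (Finset.mem_Ico.2 ⟨by omega, by omega⟩)
  -- finite subcover argument
  have hUopen : ∀ x : (W : Set G), IsOpen ((x : G) • N) := fun x => hNopen.smul _
  have hcover : (W : Set G) ⊆ ⋃ x : (W : Set G), (x : G) • N := by
    intro w hw
    refine Set.mem_iUnion.2 ⟨⟨w, hw⟩, ?_⟩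
    rw [Set.mem_smul_set_iff_inv_smul_mem]
    simpa using hN1
  obtain ⟨t, ht⟩ := hWcompact.elim_finite_subcover _ hUopen hcover
  have hsub : (W : Set G) ⊆ ↑(t.image (fun x : (W : Set G) => (x : G))) := by
    intro w hw
    obtain ⟨x, hxt, hwx⟩ := Set.mem_iUnion₂.1 (ht hw)
    have hx1 : (x : G)⁻¹ * w ∈ N := by
      rw [Set.mem_smul_set_iff_inv_smul_mem] at hwx
      simpa using hwx
    have hx2 : (x : G)⁻¹ * w ∈ W := W.mul_mem (W.inv_mem x.2) hw
    have h1 : (x : G)⁻¹ * w = 1 := hkey _ hx2 hx1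
    have hwx' : (x : G) = w := inv_mul_eq_one.mp h1
    rw [← hwx']
    exact Finset.mem_coe.2 (Finset.mem_image.2 ⟨x, hxt, rfl⟩)
  refine ⟨Set.Finite.subset (Finset.finite_toSet _) hsub, ?_⟩
  constructor
  intro n hn g
  rw [hmem] at hn ⊢
  intro m hm
  have h1 := hn m hm
  have h2 : (α ^ (-m)) (g * n * g⁻¹) =
      (α ^ (-m)) g * (α ^ (-m)) n * ((α ^ (-m)) g)⁻¹ := by
    simp [map_mul, map_inv]
  rw [h2]
  exact Subgroup.Normal.conj_mem ‹V.Normal› _ h1 _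
end

section
/- Let G be a compact, Hausdorff, totally disconnected topological group and α a topologically transitive topological group automorphism of G (some x ∈ G has dense orbit { α^n(x) : n ∈ ℤ }). Suppose V is an open normal subgroup of G with ⋂_{k∈ℤ} α^k(V) = {1} and V = V₊V₋. Then: (1) there exists k ∈ ℕ such that the setwise product α^k(V₊)·V₋ equals G; and (2) the union ⋃_{n∈ℕ} ( α^n(V₊) ∩ α^{-n}(V₋) ) is dense in G. -/
open Pointwise Filter Topology

variable {G : Type*}

section Auxiliary
variable {G : Type*} [Group G]

open Set

/-- `α^k(S)` for `k : ℤ`. -/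
def zim (α : MulAut G) (k : ℤ) (S : Set G) : Set G := ⇑(α ^ k) '' S

lemma zim_mono (α : MulAut G) (k : ℤ) {S T : Set G} (h : S ⊆ T) : zim α k S ⊆ zim α k T :=
  Set.image_mono h

lemma zim_zero (α : MulAut G) (S : Set G) : zim α 0 S = S := by simp [zim]

lemma coe_zpow_add (α : MulAut G) (j k : ℤ) : ⇑(α ^ (j + k)) = ⇑(α ^ j) ∘ ⇑(α ^ k) := by
  ext x; rw [zpow_add]; rfl

lemma zim_add (α : MulAut G) (j k : ℤ) (S : Set G) :
    zim α (j + k) S = zim α j (zim α k S) := by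
  rw [zim, zim, zim, coe_zpow_add, Set.image_comp]

lemma zim_inv (α : MulAut G) (k : ℤ) (S : Set G) : zim α⁻¹ k S = zim α (-k) S := by
  rw [zim, zim, inv_zpow, ← zpow_neg]

lemma zim_natpow (α : MulAut G) (n : ℕ) (S : Set G) : ⇑(α ^ n) '' S = zim α n S := by
  rw [zim, zpow_natCast]

lemma zim_invpow (α : MulAut G) (n : ℕ) (S : Set G) : ⇑(α⁻¹ ^ n) '' S = zim α (-n) S := by
  rw [zim_natpow α⁻¹, zim_inv]

lemma zim_mul (α : MulAut G) (k : ℤ) (S T : Set G) :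
    zim α k (S * T) = zim α k S * zim α k T := by
  simpa [zim] using Set.image_mul (m := (α ^ k : MulAut G)) (s := S) (t := T)

lemma zim_univ (α : MulAut G) (k : ℤ) : zim α k Set.univ = Set.univ := by
  rw [zim, Set.image_univ]
  exact Set.range_eq_univ.2 (α ^ k).surjective

/-- If `S ⊆ α(S)` then `k ↦ α^k(S)` is monotone over `ℤ`. -/
lemma zim_chain_mono (α : MulAut G) {S : Set G} (h : S ⊆ zim α 1 S) {j k : ℤ} (hjk : j ≤ k) :
    zim α j S ⊆ zim α k S := by
  have hn : ∀ n : ℕ, S ⊆ zim α n S := by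
    intro n
    induction n with
    | zero => rw [Nat.cast_zero, zim_zero]
    | succ n ih =>
      refine h.trans ?_
      have : zim α 1 S ⊆ zim α 1 (zim α n S) := zim_mono _ _ ih
      rw [← zim_add] at this
      have hc : ((n : ℤ) + 1) = (((n + 1 : ℕ)) : ℤ) := by push_cast; ring
      rw [add_comm, hc] at this
      exact this.trans (by rfl) |>.trans (le_refl _)
  have hk : k = j + ((k - j).toNat : ℤ) := by omega
  rw [hk, zim_add]
  exact zim_mono _ _ (hn _)

/-- If `α(S) ⊆ S` then `k ↦ α^k(S)` is antitone over `ℤ`. -/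
lemma zim_chain_anti (α : MulAut G) {S : Set G} (h : zim α 1 S ⊆ S) {j k : ℤ} (hjk : j ≤ k) :
    zim α k S ⊆ zim α j S := by
  have hn : ∀ n : ℕ, zim α n S ⊆ S := by
    intro n
    induction n with
    | zero => rw [Nat.cast_zero, zim_zero]
    | succ n ih =>
      have : zim α 1 (zim α n S) ⊆ zim α 1 S := zim_mono _ _ ih
      rw [← zim_add] at this
      have hc : ((n : ℤ) + 1) = (((n + 1 : ℕ)) : ℤ) := by push_cast; ring
      rw [add_comm, hc] at this
      exact le_trans this h
  have hk : k = j + ((k - j).toNat : ℤ) := by omega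
  rw [hk, zim_add]
  exact zim_mono _ _ (hn _)

lemma mapAut_normal (α : MulAut G) (V : Subgroup G) (h : V.Normal) : (mapAut α V).Normal := by
  constructor
  rintro n ⟨v, hv, rfl⟩ g
  refine ⟨α⁻¹ g * v * (α⁻¹ g)⁻¹, h.conj_mem v hv _, ?_⟩
  simp [map_mul]

lemma normal_iInf {ι : Sort*} (H : ι → Subgroup G) (h : ∀ i, (H i).Normal) :
    (⨅ i, H i).Normal := by
  constructor
  intro n hn g
  rw [Subgroup.mem_iInf] at hn ⊢
  exact fun i => (h i).conj_mem _ (hn i) g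

lemma zimSub_coe (α : MulAut G) (k : ℤ) (V : Subgroup G) :
    ((mapAut (α ^ k) V : Subgroup G) : Set G) = zim α k (V : Set G) := rfl

lemma plusSub_coe (α : MulAut G) (V : Subgroup G) :
    ((plusSub α V : Subgroup G) : Set G) = plusPart α (V : Set G) := by
  rw [plusSub, plusPart, Subgroup.coe_iInf]
  rfl

lemma minusSub_coe (α : MulAut G) (V : Subgroup G) :
    ((minusSub α V : Subgroup G) : Set G) = minusPart α (V : Set G) := by
  rw [minusSub, minusPart, Subgroup.coe_iInf]
  rfl

lemma zim_iInter {ι : Sort*} [Nonempty ι] (α : MulAut G) (k : ℤ) (S : ι → Set G) :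
    zim α k (⋂ i, S i) = ⋂ i, zim α k (S i) :=
  Set.image_iInter (α ^ k).bijective S

lemma plusPart_eq (α : MulAut G) (V : Set G) : plusPart α V = ⋂ k : ℕ, zim α k V := by
  rw [plusPart]; exact iInter_congr fun k => zim_natpow α k V

lemma minusPart_eq (α : MulAut G) (V : Set G) : minusPart α V = ⋂ k : ℕ, zim α (-k) V := by
  rw [minusPart]; exact iInter_congr fun k => zim_invpow α k V

lemma mem_zim_plus {α : MulAut G} {V : Set G} {a : ℤ} {x : G} :
    x ∈ zim α a (plusPart α V) ↔ ∀ j : ℤ, a ≤ j → x ∈ zim α j V := by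
  rw [plusPart_eq, zim_iInter, Set.mem_iInter]
  constructor
  · intro h j hj
    have := h (j - a).toNat
    rwa [← zim_add, show a + ((j - a).toNat : ℤ) = j by omega] at this
  · intro h k
    rw [← zim_add]
    exact h (a + k) (by omega)

lemma mem_zim_minus {α : MulAut G} {V : Set G} {b : ℤ} {x : G} :
    x ∈ zim α b (minusPart α V) ↔ ∀ j : ℤ, j ≤ b → x ∈ zim α j V := by
  rw [minusPart_eq, zim_iInter, Set.mem_iInter]
  constructor
  · intro h j hj
    have := h (b - j).toNat
    rwa [← zim_add, show b + (-((b - j).toNat : ℤ)) = j by omega] at this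
  · intro h k
    rw [← zim_add]
    exact h (b + -k) (by omega)

lemma plus_chain (α : MulAut G) (V : Set G) : plusPart α V ⊆ zim α 1 (plusPart α V) := by
  intro x hx
  rw [mem_zim_plus]
  intro j hj
  rw [← zim_zero α (plusPart α V), mem_zim_plus] at hx
  exact hx j (by omega)

lemma minus_chain (α : MulAut G) (V : Set G) : zim α 1 (minusPart α V) ⊆ minusPart α V := by
  intro x hx
  rw [mem_zim_minus] at hx
  rw [← zim_zero α (minusPart α V), mem_zim_minus]
  exact fun j hj => hx j (by omega)

section Top
variable [TopologicalSpace G]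

lemma cont_zpow (α : MulAut G) (hc : Continuous ⇑α) (hc' : Continuous ⇑α⁻¹) (k : ℤ) :
    Continuous ⇑(α ^ k) := by
  induction k using Int.induction_on with
  | zero => simpa using continuous_id
  | succ n ih =>
    have : ⇑(α ^ ((n : ℤ) + 1)) = ⇑(α ^ (n : ℤ)) ∘ ⇑α := by
      ext x; rw [zpow_add_one]; rfl
    rw [this]; exact ih.comp hc
  | pred n ih =>
    have : ⇑(α ^ (-(n : ℤ) - 1)) = ⇑(α ^ (-(n : ℤ))) ∘ ⇑α⁻¹ := by
      ext x; rw [zpow_sub_one]; rfl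
    rw [this]; exact ih.comp hc'

/-- `α^k` as a homeomorphism. -/
def zhomeo (α : MulAut G) (hc : Continuous ⇑α) (hc' : Continuous ⇑α⁻¹) (k : ℤ) : G ≃ₜ G where
  toFun := ⇑(α ^ k)
  invFun := ⇑(α ^ (-k))
  left_inv := fun x => by rw [← MulAut.mul_apply, ← zpow_add]; simp
  right_inv := fun x => by rw [← MulAut.mul_apply, ← zpow_add]; simp
  continuous_toFun := cont_zpow α hc hc' k
  continuous_invFun := cont_zpow α hc hc' (-k)

lemma zhomeo_coe (α : MulAut G) (hc : Continuous ⇑α) (hc' : Continuous ⇑α⁻¹) (k : ℤ) :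
    ⇑(zhomeo α hc hc' k) = ⇑(α ^ k) := rfl

lemma zim_isOpen (α : MulAut G) (hc : Continuous ⇑α) (hc' : Continuous ⇑α⁻¹) (k : ℤ)
    {S : Set G} (h : IsOpen S) : IsOpen (zim α k S) := by
  rw [zim, ← zhomeo_coe α hc hc' k]
  exact (Homeomorph.isOpen_image _).2 h

/-- Core sweeping lemma: under a topologically transitive automorphism, a pair of normal
subgroups `P ⊆ α(P)`, `α(M) ⊆ M` with `P·M` open eventually sweeps out the whole group. -/
lemma lemA [IsTopologicalGroup G] [CompactSpace G]
    (α : MulAut G) (hc : Continuous ⇑α) (hc' : Continuous ⇑α⁻¹)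
    (htt : ∃ x : G, Dense (Set.range fun n : ℤ => (α ^ n) x))
    (P M : Subgroup G) (hPn : P.Normal) (hMn : M.Normal)
    (hP : (P : Set G) ⊆ zim α 1 (P : Set G)) (hM : zim α 1 (M : Set G) ⊆ (M : Set G))
    (hOpen : IsOpen ((P : Set G) * (M : Set G))) :
    ∃ k : ℤ, 0 ≤ k ∧ zim α k (P : Set G) * (M : Set G) = Set.univ := by
  set Dsub : ℤ → ℤ → Subgroup G := fun k l => mapAut (α ^ k) P ⊔ mapAut (α ^ l) M with hDsub
  haveI hQn : ∀ k : ℤ, (mapAut (α ^ k) P).Normal := fun k => mapAut_normal _ _ hPn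
  haveI hRn : ∀ l : ℤ, (mapAut (α ^ l) M).Normal := fun l => mapAut_normal _ _ hMn
  have hDcoe : ∀ k l : ℤ, ((Dsub k l : Subgroup G) : Set G)
      = zim α k (P : Set G) * zim α l (M : Set G) := by
    intro k l
    haveI := hRn l
    rw [hDsub]
    rw [← zimSub_coe, ← zimSub_coe]
    exact Subgroup.mul_normal _ _
  have hDmono : ∀ k k' l l' : ℤ, k ≤ k' → l' ≤ l →
      ((Dsub k l : Subgroup G) : Set G) ⊆ ((Dsub k' l' : Subgroup G) : Set G) := by
    intro k k' l l' hk hl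
    rw [hDcoe, hDcoe]
    exact Set.mul_subset_mul (zim_chain_mono α hP hk) (zim_chain_anti α hM hl)
  have hD00 : ((Dsub 0 0 : Subgroup G) : Set G) = (P : Set G) * (M : Set G) := by
    rw [hDcoe, zim_zero, zim_zero]
  have hDle : ∀ k k' l l' : ℤ, k ≤ k' → l' ≤ l → Dsub k l ≤ Dsub k' l' := by
    intro k k' l l' hk hl
    exact SetLike.coe_subset_coe.1 (hDmono k k' l l' hk hl)
  have hDopen : ∀ n : ℕ, IsOpen ((Dsub n (-n) : Subgroup G) : Set G) := by
    intro n
    refine Subgroup.isOpen_mono (hDle 0 n 0 (-n) (by positivity) (by omega)) ?_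
    rw [hD00]; exact hOpen
  set H : Set G := ⋃ n : ℕ, ((Dsub n (-n) : Subgroup G) : Set G) with hH
  have hHopen : IsOpen H := isOpen_iUnion fun n => hDopen n
  have hHne : (1 : G) ∈ H := Set.mem_iUnion.2 ⟨0, Subgroup.one_mem _⟩
  obtain ⟨x, hx⟩ := htt
  obtain ⟨_, ⟨⟨n₀, rfl⟩, hn₀H⟩⟩ :=
    hx.exists_mem_open hHopen ⟨1, hHne⟩
  obtain ⟨N₀, hN₀⟩ := Set.mem_iUnion.1 hn₀H
  have horb : ∀ n : ℤ, (α ^ n) x ∈ H := by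
    intro n
    have h1 : (α ^ n) x = (α ^ (n - n₀)) ((α ^ n₀) x) := by
      rw [← MulAut.mul_apply, ← zpow_add]; ring_nf
    have h2 : (α ^ n) x ∈ zim α (n - n₀) ((Dsub N₀ (-N₀) : Subgroup G) : Set G) := by
      rw [h1]; exact ⟨_, hN₀, rfl⟩
    rw [hDcoe, zim_mul, ← zim_add, ← zim_add] at h2
    set K : ℕ := (n - n₀ + N₀).toNat ⊔ ((n - n₀ + N₀).toNat ⊔ (-(n - n₀ + -N₀)).toNat) with hK
    refine Set.mem_iUnion.2 ⟨K, ?_⟩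
    rw [hDcoe]
    refine Set.mul_subset_mul (zim_chain_mono α hP ?_) (zim_chain_anti α hM ?_) h2 <;>
      · simp only [hK]
        omega
  have hHdense : Dense H := by
    refine Dense.mono ?_ hx
    rintro _ ⟨n, rfl⟩
    exact horb n
  have hHclosed : IsClosed H := by
    rw [← isOpen_compl_iff]
    rw [isOpen_iff_mem_nhds]
    intro g hg
    have hsub : g • ((P : Set G) * M) ⊆ Hᶜ := by
      rintro _ ⟨d, hd, rfl⟩
      intro hgd
      apply hg
      obtain ⟨n, hn⟩ := Set.mem_iUnion.1 hgd
      refine Set.mem_iUnion.2 ⟨n, ?_⟩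
      have hd' : d ∈ Dsub n (-n) := by
        have := hDmono 0 n 0 (-n) (by positivity) (by omega)
        rw [hD00] at this
        exact this hd
      have : (g • d) * d⁻¹ ∈ Dsub n (-n) := Subgroup.mul_mem _ hn (Subgroup.inv_mem _ hd')
      simpa [smul_eq_mul] using this
    refine Filter.mem_of_superset ?_ hsub
    refine IsOpen.mem_nhds (IsOpen.smul hOpen g) ?_
    exact ⟨1, ⟨1, Subgroup.one_mem P, 1, Subgroup.one_mem M, by simp⟩, by simp⟩
  have hHuniv : H = Set.univ := by
    have := hHdense.closure_eq
    rw [hHclosed.closure_eq] at this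
    exact this
  have hdir : Directed (· ⊆ ·) (fun n : ℕ => ((Dsub n (-n) : Subgroup G) : Set G)) := by
    intro a b
    refine ⟨a ⊔ b, ?_, ?_⟩
    · exact hDmono a ((a ⊔ b : ℕ) : ℤ) (-a) (-(a ⊔ b : ℕ)) (by push_cast; omega)
        (by push_cast; omega)
    · exact hDmono b ((a ⊔ b : ℕ) : ℤ) (-b) (-(a ⊔ b : ℕ)) (by push_cast; omega)
        (by push_cast; omega)
  obtain ⟨N, hN⟩ := isCompact_univ.elim_directed_cover
    (fun n : ℕ => ((Dsub n (-n) : Subgroup G) : Set G)) (fun n => hDopen n)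
    (by rw [← hH, hHuniv]) hdir
  have hNuniv : ((Dsub N (-N) : Subgroup G) : Set G) = Set.univ :=
    Set.eq_univ_of_univ_subset hN
  refine ⟨2 * N, by positivity, ?_⟩
  have := congrArg (zim α N) hNuniv
  rw [hDcoe, zim_mul, ← zim_add, ← zim_add, zim_univ] at this
  have he : (N : ℤ) + N = 2 * N := by ring
  have he2 : (N : ℤ) + -N = 0 := by ring
  rw [he, he2, zim_zero] at this
  exact this

end Top

section Main
variable (α : MulAut G) (V : Subgroup G)
  (hV1 : (⋂ k : ℤ, ⇑(α ^ k) '' (V : Set G)) = ({1} : Set G))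

include hV1 in
lemma triv_inter {a b : ℤ} (hab : a ≤ b + 1) {x : G}
    (hxa : x ∈ zim α a (plusPart α (V : Set G)))
    (hxb : x ∈ zim α b (minusPart α (V : Set G))) : x = 1 := by
  have hx : x ∈ ⋂ k : ℤ, ⇑(α ^ k) '' (V : Set G) := by
    rw [Set.mem_iInter]
    intro j
    rcases le_or_gt a j with h | h
    · exact mem_zim_plus.1 hxa j h
    · exact mem_zim_minus.1 hxb j (by omega)
  rw [hV1] at hx
  exact hx

variable (hVta : (V : Set G) = plusPart α (V : Set G) * minusPart α (V : Set G))

include hV1 hVta in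
lemma key_lemma : ∀ m : ℕ, ∀ u : G, (∀ j : ℤ, 0 ≤ j → j ≤ m → u ∈ zim α j (V : Set G)) →
    u ∈ plusPart α (V : Set G) * zim α m (minusPart α (V : Set G)) := by
  intro m
  induction m with
  | zero =>
    intro u hu
    have := hu 0 le_rfl le_rfl
    rw [zim_zero] at this
    rw [Nat.cast_zero, zim_zero]
    rw [hVta] at this
    exact this
  | succ m ih =>
    intro u hu
    obtain ⟨a, ha, b, hb, rfl⟩ := ih u (fun j h1 h2 => hu j h1 (by push_cast; omega))
    have h2 : a * b ∈ zim α (m + 1) ((V : Set G)) := by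
      have := hu (m + 1) (by positivity) (by push_cast; omega)
      rwa [show ((m : ℤ) + 1) = ((m + 1 : ℕ) : ℤ) by push_cast; ring] at this
    rw [hVta, zim_mul] at h2
    obtain ⟨a', ha', b', hb', heq⟩ := h2
    have ha'' : a' = a * b * b'⁻¹ := eq_mul_inv_of_mul_eq heq
    have hc : a⁻¹ * a' = b * b'⁻¹ := by rw [ha'']; group
    have hcp : a⁻¹ * a' ∈ zim α ((m : ℤ) + 1) (plusPart α (V : Set G)) := by
      have haa : a ∈ zim α ((m : ℤ) + 1) (plusPart α (V : Set G)) := by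
        refine zim_chain_mono α (plus_chain α (V : Set G)) (by positivity) ?_
        rwa [zim_zero]
      have hset : ((mapAut (α ^ ((m : ℤ) + 1)) (plusSub α V) : Subgroup G) : Set G)
          = zim α ((m : ℤ) + 1) (plusPart α (V : Set G)) := by
        rw [zimSub_coe, plusSub_coe]
      have h1 : a⁻¹ * a' ∈ (mapAut (α ^ ((m : ℤ) + 1)) (plusSub α V) : Subgroup G) := by
        refine Subgroup.mul_mem _ (Subgroup.inv_mem _ ?_) ?_ <;>
          rw [← SetLike.mem_coe, hset]
        · exact haa
        · exact ha'
      rw [← SetLike.mem_coe, hset] at h1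
      exact h1
    have hcm : b * b'⁻¹ ∈ zim α (m : ℤ) (minusPart α (V : Set G)) := by
      have hbb : b' ∈ zim α (m : ℤ) (minusPart α (V : Set G)) :=
        zim_chain_anti α (minus_chain α (V : Set G)) (by omega) hb'
      have hset : ((mapAut (α ^ (m : ℤ)) (minusSub α V) : Subgroup G) : Set G)
          = zim α (m : ℤ) (minusPart α (V : Set G)) := by
        rw [zimSub_coe, minusSub_coe]
      have h1 : b * b'⁻¹ ∈ (mapAut (α ^ (m : ℤ)) (minusSub α V) : Subgroup G) := by
        refine Subgroup.mul_mem _ ?_ (Subgroup.inv_mem _ ?_) <;> rw [← SetLike.mem_coe, hset]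
        · exact hb
        · exact hbb
      rw [← SetLike.mem_coe, hset] at h1
      exact h1
    have hc1 : a⁻¹ * a' = 1 := by
      refine triv_inter α V hV1 (a := (m : ℤ) + 1) (b := (m : ℤ)) (by omega) hcp ?_
      rw [hc]
      exact hcm
    have hb'b : b = b' := mul_inv_eq_one.1 (by rw [← hc]; exact hc1)
    refine ⟨a, ha, b', ?_, ?_⟩
    · rwa [show (((m + 1 : ℕ)) : ℤ) = (m : ℤ) + 1 by push_cast; ring]
    · rw [← hb'b]

end Main
end Auxiliary

/-- For a topologically transitive compact pair and `V` open normal with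
`⋂ α^k(V) = 1` and `V = V₊V₋`: (1) `α^k(V₊)V₋ = G` for some `k`; (2) the union
`⋃ₙ (α^n(V₊) ∩ α^{-n}(V₋))` is dense in `G`. -/
theorem prodeq_and_dense_union
    [Group G] [TopologicalSpace G] [IsTopologicalGroup G] [T2Space G]
    [TotallyDisconnectedSpace G] [CompactSpace G]
    (α : MulAut G) (hαc : Continuous ⇑α) (hαc' : Continuous ⇑(α⁻¹))
    (htt : ∃ x : G, Dense (Set.range fun n : ℤ => (α ^ n) x))
    (V : Subgroup G) [V.Normal] (hVo : IsOpen (V : Set G))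
    (hV1 : (⋂ k : ℤ, ⇑(α ^ k) '' (V : Set G)) = ({1} : Set G))
    (hVta : TidyAbove α (V : Set G)) :
    (∃ k : ℕ, (⇑(α ^ k) '' plusPart α (V : Set G)) * minusPart α (V : Set G) = Set.univ) ∧
    Dense (⋃ n : ℕ,
      (⇑(α ^ n) '' plusPart α (V : Set G)) ∩ (⇑(α⁻¹ ^ n) '' minusPart α (V : Set G))) := by
  classical
  set Vs : Set G := (V : Set G) with hVs
  have hVta' : Vs = plusPart α Vs * minusPart α Vs := hVta
  -- normality of the building blocks
  haveI hPn : (plusSub α V).Normal :=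
    normal_iInf _ fun k => mapAut_normal _ _ inferInstance
  haveI hMn : (minusSub α V).Normal :=
    normal_iInf _ fun k => mapAut_normal _ _ inferInstance
  have hc := hαc
  have hc' := hαc'
  -- Part (1)
  have hchainP : ((plusSub α V : Subgroup G) : Set G) ⊆
      zim α 1 ((plusSub α V : Subgroup G) : Set G) := by
    rw [plusSub_coe]; exact plus_chain α Vs
  have hchainM : zim α 1 ((minusSub α V : Subgroup G) : Set G) ⊆
      ((minusSub α V : Subgroup G) : Set G) := by
    rw [minusSub_coe]; exact minus_chain α Vs
  have hopenV : IsOpen (((plusSub α V : Subgroup G) : Set G)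
      * ((minusSub α V : Subgroup G) : Set G)) := by
    rw [plusSub_coe, minusSub_coe, ← hVta']
    exact hVo
  obtain ⟨k₁, hk₁, hk₁eq⟩ := lemA α hc hc' htt (plusSub α V) (minusSub α V) hPn hMn
    hchainP hchainM hopenV
  rw [plusSub_coe, minusSub_coe] at hk₁eq
  have part1 : ∃ k : ℕ, (⇑(α ^ k) '' plusPart α (V : Set G)) * minusPart α (V : Set G)
      = Set.univ := by
    refine ⟨k₁.toNat, ?_⟩
    rw [zim_natpow, Int.toNat_of_nonneg hk₁]
    exact hk₁eq
  refine ⟨part1, ?_⟩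
  -- Part (2): density of the union
  -- subgroups zim α k V₊ and zim α k V₋
  set Pz : ℤ → Subgroup G := fun k => mapAut (α ^ k) (plusSub α V) with hPz
  set Mz : ℤ → Subgroup G := fun k => mapAut (α ^ k) (minusSub α V) with hMz
  have hPzcoe : ∀ k : ℤ, ((Pz k : Subgroup G) : Set G) = zim α k (plusPart α Vs) := by
    intro k; rw [hPz]; rw [zimSub_coe, plusSub_coe]
  have hMzcoe : ∀ k : ℤ, ((Mz k : Subgroup G) : Set G) = zim α k (minusPart α Vs) := by
    intro k; rw [hMz]; rw [zimSub_coe, minusSub_coe]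
  haveI hPzn : ∀ k : ℤ, (Pz k).Normal := fun k => mapAut_normal _ _ hPn
  haveI hMzn : ∀ k : ℤ, (Mz k).Normal := fun k => mapAut_normal _ _ hMn
  set Sn : ℕ → Subgroup G := fun n => Pz (-n) ⊔ Mz n with hSn
  have hSncoe : ∀ n : ℕ, ((Sn n : Subgroup G) : Set G)
      = zim α (-n) (plusPart α Vs) * zim α n (minusPart α Vs) := by
    intro n
    haveI := hMzn n
    rw [hSn]
    have := Subgroup.mul_normal (Pz (-(n : ℤ))) (Mz n)
    rw [this, hPzcoe, hMzcoe]
  -- V_n is contained in α^j(V) for |j| ≤ n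
  have hVnsub : ∀ n : ℕ, ∀ j : ℤ, -n ≤ j → j ≤ n →
      ((Sn n : Subgroup G) : Set G) ⊆ zim α j Vs := by
    intro n j hj1 hj2
    rw [hSncoe]
    rintro _ ⟨c, hcm, d, hdm, rfl⟩
    have hc1 : c ∈ zim α j Vs := mem_zim_plus.1 hcm j hj1
    have hd1 : d ∈ zim α j Vs := mem_zim_minus.1 hdm j hj2
    rw [← zimSub_coe α j V] at hc1 hd1 ⊢
    exact Subgroup.mul_mem _ hc1 hd1
  -- V_n is open
  have hVnopen : ∀ n : ℕ, IsOpen ((Sn n : Subgroup G) : Set G) := by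
    intro n
    have hinner : IsOpen (plusPart α Vs * zim α (2 * n : ℕ) (minusPart α Vs)) := by
      have heq : plusPart α Vs * zim α (2 * n : ℕ) (minusPart α Vs)
          = ⋂ j : Fin (2 * n + 1), zim α (j : ℤ) Vs := by
        apply Set.Subset.antisymm
        · rintro _ ⟨c, hcm, d, hdm, rfl⟩
          rw [Set.mem_iInter]
          intro j
          have hc1 : c ∈ zim α (j : ℤ) Vs := by
            rw [← zim_zero α (plusPart α Vs)] at hcm
            exact mem_zim_plus.1 hcm _ (by positivity)
          have hd1 : d ∈ zim α (j : ℤ) Vs := by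
            refine mem_zim_minus.1 hdm _ ?_
            have := j.isLt
            omega
          rw [← zimSub_coe α (j : ℤ) V] at hc1 hd1 ⊢
          exact Subgroup.mul_mem _ hc1 hd1
        · intro u hu
          rw [Set.mem_iInter] at hu
          refine key_lemma α V hV1 hVta' (2 * n) u ?_
          intro j h1 h2
          have := hu ⟨j.toNat, by omega⟩
          rwa [show ((⟨j.toNat, by omega⟩ : Fin (2 * n + 1)) : ℤ) = j by simp; omega] at this
      rw [heq]
      exact isOpen_iInter_of_finite fun j => zim_isOpen α hc hc' _ hVo
    have himg := zim_isOpen α hc hc' (-(n : ℤ)) hinner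
    rw [zim_mul, ← zim_add] at himg
    rw [show (-(n : ℤ) + (2 * n : ℕ)) = (n : ℤ) by push_cast; ring] at himg
    rw [hSncoe]
    exact himg
  -- V_n is closed
  have hVnclosed : ∀ n : ℕ, IsClosed ((Sn n : Subgroup G) : Set G) := fun n =>
    Subgroup.isClosed_of_isOpen _ (hVnopen n)
  -- V_n is decreasing
  have hVnanti : ∀ a b : ℕ, a ≤ b → ((Sn b : Subgroup G) : Set G) ⊆ ((Sn a : Subgroup G) : Set G) := by
    intro a b hab
    rw [hSncoe, hSncoe]
    refine Set.mul_subset_mul ?_ ?_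
    · exact zim_chain_mono α (plus_chain α Vs) (by omega)
    · exact zim_chain_anti α (minus_chain α Vs) (by omega)
  -- the V_n form a neighbourhood basis of 1
  have hbasis : ∀ U : Set G, IsOpen U → (1 : G) ∈ U →
      ∃ n : ℕ, ((Sn n : Subgroup G) : Set G) ⊆ U := by
    intro U hU h1U
    have hcpt : IsCompact Uᶜ := hU.isClosed_compl.isCompact
    have hcover : Uᶜ ⊆ ⋃ n : ℕ, (((Sn n : Subgroup G) : Set G))ᶜ := by
      intro y hy
      by_contra hcon
      simp only [Set.mem_iUnion, Set.mem_compl_iff, not_exists, not_not] at hcon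
      have hy1 : y = 1 := by
        have hyall : ∀ j : ℤ, y ∈ zim α j Vs := by
          intro j
          exact hVnsub j.natAbs j (by omega) (by omega) (hcon j.natAbs)
        have : y ∈ ⋂ k : ℤ, ⇑(α ^ k) '' (V : Set G) := Set.mem_iInter.2 fun j => hyall j
        rw [hV1] at this
        exact this
      exact hy (hy1 ▸ h1U)
    have hdir : Directed (· ⊆ ·) (fun n : ℕ => (((Sn n : Subgroup G) : Set G))ᶜ) := by
      intro a b
      exact ⟨a ⊔ b, Set.compl_subset_compl.2 (hVnanti a (a ⊔ b) le_sup_left),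
        Set.compl_subset_compl.2 (hVnanti b (a ⊔ b) le_sup_right)⟩
    obtain ⟨N, hN⟩ := hcpt.elim_directed_cover _
      (fun n => (hVnclosed n).isOpen_compl) hcover hdir
    exact ⟨N, by
      intro z hz
      by_contra hzU
      exact hN (Set.mem_compl hzU) hz⟩
  -- sweeping in both directions at scale n
  have happ1 : ∀ n : ℕ, ∃ a : ℤ,
      zim α a (plusPart α Vs) * zim α n (minusPart α Vs) = Set.univ := by
    intro n
    have h1 : ((Pz (-(n : ℤ)) : Subgroup G) : Set G) ⊆
        zim α 1 ((Pz (-(n : ℤ)) : Subgroup G) : Set G) := by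
      rw [hPzcoe, ← zim_add]
      exact zim_chain_mono α (plus_chain α Vs) (by omega)
    have h2 : zim α 1 ((Mz (n : ℤ)) : Set G) ⊆ ((Mz (n : ℤ)) : Set G) := by
      rw [hMzcoe, ← zim_add]
      exact zim_chain_anti α (minus_chain α Vs) (by omega)
    have h3 : IsOpen (((Pz (-(n : ℤ))) : Set G) * ((Mz (n : ℤ)) : Set G)) := by
      have := hVnopen n
      rw [hSncoe] at this
      rw [hPzcoe, hMzcoe]
      exact this
    obtain ⟨k, hk, hkeq⟩ := lemA α hc hc' htt (Pz (-(n : ℤ))) (Mz (n : ℤ))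
      (hPzn _) (hMzn _) h1 h2 h3
    refine ⟨k + -(n : ℤ), ?_⟩
    rw [hPzcoe, hMzcoe, ← zim_add] at hkeq
    exact hkeq
  have happ2 : ∀ n : ℕ, ∃ b : ℤ,
      zim α b (minusPart α Vs) * zim α (-(n : ℤ)) (plusPart α Vs) = Set.univ := by
    intro n
    have hcinv : Continuous ⇑(α⁻¹)⁻¹ := by rw [inv_inv]; exact hc
    have httinv : ∃ x : G, Dense (Set.range fun m : ℤ => (α⁻¹ ^ m) x) := by
      obtain ⟨x, hx⟩ := htt
      refine ⟨x, ?_⟩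
      have : (Set.range fun m : ℤ => (α⁻¹ ^ m) x) = Set.range fun m : ℤ => (α ^ m) x := by
        ext y
        constructor
        · rintro ⟨m, rfl⟩
          exact ⟨-m, by show (α ^ (-m)) x = (α⁻¹ ^ m) x; rw [inv_zpow, ← zpow_neg]⟩
        · rintro ⟨m, rfl⟩
          exact ⟨-m, by show (α⁻¹ ^ (-m)) x = (α ^ m) x; rw [inv_zpow, ← zpow_neg, neg_neg]⟩
      rw [this]
      exact hx
    have h1 : ((Mz (n : ℤ) : Subgroup G) : Set G) ⊆
        zim α⁻¹ 1 ((Mz (n : ℤ) : Subgroup G) : Set G) := by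
      rw [hMzcoe, zim_inv, ← zim_add]
      exact zim_chain_anti α (minus_chain α Vs) (by omega)
    have h2 : zim α⁻¹ 1 ((Pz (-(n : ℤ))) : Set G) ⊆ ((Pz (-(n : ℤ))) : Set G) := by
      rw [zim_inv, hPzcoe, ← zim_add]
      exact zim_chain_mono α (plus_chain α Vs) (by omega)
    have h3 : IsOpen (((Mz (n : ℤ)) : Set G) * ((Pz (-(n : ℤ))) : Set G)) := by
      haveI := hMzn (n : ℤ)
      haveI := hPzn (-(n : ℤ))
      have hcomm : ((Mz (n : ℤ)) : Set G) * ((Pz (-(n : ℤ))) : Set G)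
          = ((Pz (-(n : ℤ))) : Set G) * ((Mz (n : ℤ)) : Set G) := by
        rw [← Subgroup.mul_normal, ← Subgroup.mul_normal, sup_comm]
      rw [hcomm, hPzcoe, hMzcoe]
      have := hVnopen n
      rw [hSncoe] at this
      exact this
    obtain ⟨k, hk, hkeq⟩ := lemA α⁻¹ hc' hcinv httinv (Mz (n : ℤ)) (Pz (-(n : ℤ)))
      (hMzn _) (hPzn _) h1 h2 h3
    refine ⟨-k + (n : ℤ), ?_⟩
    rw [zim_inv, hMzcoe, hPzcoe, ← zim_add] at hkeq
    exact hkeq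
  -- density
  rw [dense_iff_inter_open]
  rintro U hUopen ⟨g, hgU⟩
  set U' : Set G := (fun y => g * y) ⁻¹' U with hU'
  have hU'open : IsOpen U' := hUopen.preimage (continuous_mul_left g)
  have h1U' : (1 : G) ∈ U' := by
    simp only [hU', Set.mem_preimage, mul_one]
    exact hgU
  obtain ⟨N, hNsub⟩ := hbasis U' hU'open h1U'
  obtain ⟨a, ha⟩ := happ1 N
  obtain ⟨b, hb⟩ := happ2 N
  have hg1 : g ∈ zim α a (plusPart α Vs) * zim α N (minusPart α Vs) := by
    rw [ha]; exact Set.mem_univ g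
  obtain ⟨p, hp, q, hq, hpq⟩ := hg1
  have hp1 : p ∈ zim α b (minusPart α Vs) * zim α (-(N : ℤ)) (plusPart α Vs) := by
    rw [hb]; exact Set.mem_univ p
  obtain ⟨s, hs, t, ht, hst⟩ := hp1
  -- s lies in the union
  set n₀ : ℕ := (a ⊔ (-b)).toNat with hn₀
  have hsP : s ∈ zim α (n₀ : ℤ) (plusPart α Vs) := by
    have hps : s = p * t⁻¹ := by rw [← hst]; group
    have hpP : p ∈ zim α (n₀ : ℤ) (plusPart α Vs) :=
      zim_chain_mono α (plus_chain α Vs) (by omega) hp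
    have htP : t ∈ zim α (n₀ : ℤ) (plusPart α Vs) :=
      zim_chain_mono α (plus_chain α Vs) (by omega) ht
    rw [← hPzcoe] at hpP htP ⊢
    rw [hps]
    exact Subgroup.mul_mem _ hpP (Subgroup.inv_mem _ htP)
  have hsM : s ∈ zim α (-(n₀ : ℤ)) (minusPart α Vs) :=
    zim_chain_anti α (minus_chain α Vs) (by omega) hs
  have hsB : s ∈ ⋃ n : ℕ,
      (⇑(α ^ n) '' plusPart α (V : Set G)) ∩ (⇑(α⁻¹ ^ n) '' minusPart α (V : Set G)) := by
    refine Set.mem_iUnion.2 ⟨n₀, ?_, ?_⟩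
    · rw [zim_natpow]; exact hsP
    · rw [zim_invpow]; exact hsM
  -- s lies in U
  have hsU : s ∈ U := by
    have htq : t * q ∈ ((Sn N : Subgroup G) : Set G) := by
      rw [hSncoe]
      exact Set.mul_mem_mul ht hq
    have hsg : s = g * (t * q)⁻¹ := by
      rw [← hpq, ← hst]; group
    have hinv : (t * q)⁻¹ ∈ ((Sn N : Subgroup G) : Set G) := by
      rw [SetLike.mem_coe] at htq ⊢
      exact Subgroup.inv_mem _ htq
    have := hNsub hinv
    rw [hU', Set.mem_preimage] at this
    rw [hsg]
    exact this
  exact ⟨s, hsU, hsB⟩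
end

section
/- Let G be a compact, Hausdorff, totally disconnected topological group and α a topologically transitive topological group automorphism of G. Then: (1) the contraction group con(α) is dense in G; and (2) the closure of the homoclinic group bcg(α) contains the commutator subgroup [G,G]. -/
open Pointwise Filter Topology

variable {G : Type*}

set_option linter.unusedSectionVars false
set_option linter.unusedVariables false
set_option linter.unnecessarySimpa false
set_option linter.unusedTactic false
set_option maxHeartbeats 1000000

open scoped commutatorElement

namespace ConDenseAux

section Grp

variable [Group G]

/-- `pre α n N = α^{-n}(N)` (preimage of `N` under `α^n`). -/
def pre (α : MulAut G) (n : ℕ) (N : Subgroup G) : Subgroup G :=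
  N.comap (α ^ n : MulAut G).toMonoidHom

/-- `post α n N = α^{n}(N)` (preimage of `N` under `α^{-n}`). -/
def post (α : MulAut G) (n : ℕ) (N : Subgroup G) : Subgroup G :=
  N.comap (α⁻¹ ^ n : MulAut G).toMonoidHom

@[simp] theorem mem_pre {α : MulAut G} {n : ℕ} {N : Subgroup G} {y : G} :
    y ∈ pre α n N ↔ (α ^ n) y ∈ N := Iff.rfl

@[simp] theorem mem_post {α : MulAut G} {n : ℕ} {N : Subgroup G} {y : G} :
    y ∈ post α n N ↔ (α⁻¹ ^ n) y ∈ N := Iff.rfl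

theorem normal_pre {α : MulAut G} {n : ℕ} {N : Subgroup G} (hN : N.Normal) :
    (pre α n N).Normal := hN.comap _

theorem normal_post {α : MulAut G} {n : ℕ} {N : Subgroup G} (hN : N.Normal) :
    (post α n N).Normal := hN.comap _

theorem normal_iInf {ι : Sort*} {H : ι → Subgroup G} (h : ∀ i, (H i).Normal) :
    (⨅ i, H i).Normal :=
  ⟨fun x hx g => Subgroup.mem_iInf.2 fun i => (h i).conj_mem x (Subgroup.mem_iInf.1 hx i) g⟩

theorem normal_inf {H K : Subgroup G} (hH : H.Normal) (hK : K.Normal) : (H ⊓ K).Normal :=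
  ⟨fun x hx g => Subgroup.mem_inf.2
    ⟨hH.conj_mem x (Subgroup.mem_inf.1 hx).1 g, hK.conj_mem x (Subgroup.mem_inf.1 hx).2 g⟩⟩

/-- `C_m(N)`: elements whose forward orbit from time `m` on lies in `N`. -/
def Cgrp (α : MulAut G) (N : Subgroup G) (m : ℕ) : Subgroup G :=
  ⨅ k : ℕ, pre α (m + k) N

theorem mem_Cgrp {α : MulAut G} {N : Subgroup G} {m : ℕ} {y : G} :
    y ∈ Cgrp α N m ↔ ∀ n, m ≤ n → (α ^ n) y ∈ N := by
  simp only [Cgrp, Subgroup.mem_iInf, mem_pre]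
  constructor
  · intro h n hn
    have := h (n - m); rwa [Nat.add_sub_cancel' hn] at this
  · intro h k; exact h (m + k) (Nat.le_add_right _ _)

theorem Cgrp_mono {α : MulAut G} {N : Subgroup G} {m m' : ℕ} (h : m ≤ m') :
    Cgrp α N m ≤ Cgrp α N m' := fun y hy =>
  mem_Cgrp.2 fun n hn => mem_Cgrp.1 hy n (le_trans h hn)

/-- `Q_j(N) = ⋂_{i=1}^{j} α^i(N)`. -/
def Qgrp (α : MulAut G) (N : Subgroup G) (j : ℕ) : Subgroup G :=
  ⨅ i : Fin j, post α (i.1 + 1) N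

theorem mem_Qgrp {α : MulAut G} {N : Subgroup G} {j : ℕ} {y : G} :
    y ∈ Qgrp α N j ↔ ∀ i, 1 ≤ i → i ≤ j → (α⁻¹ ^ i) y ∈ N := by
  simp only [Qgrp, Subgroup.mem_iInf, mem_post]
  constructor
  · intro h i h1 hj
    have := h ⟨i - 1, by omega⟩
    simpa [Nat.sub_add_cancel h1] using this
  · intro h i; exact h (i.1 + 1) (by omega) (by omega)

theorem Qgrp_anti {α : MulAut G} {N : Subgroup G} {j j' : ℕ} (h : j ≤ j') :
    Qgrp α N j' ≤ Qgrp α N j := fun y hy =>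
  mem_Qgrp.2 fun i h1 hj => mem_Qgrp.1 hy i h1 (le_trans hj h)

/-- window group `[0, K]`. -/
def Wwin (α : MulAut G) (N : Subgroup G) (K : ℕ) : Subgroup G :=
  ⨅ i : Fin (K + 1), pre α i.1 N

theorem mem_Wwin {α : MulAut G} {N : Subgroup G} {K : ℕ} {y : G} :
    y ∈ Wwin α N K ↔ ∀ i, i ≤ K → (α ^ i) y ∈ N := by
  simp only [Wwin, Subgroup.mem_iInf, mem_pre]
  constructor
  · intro h i hi; exact h ⟨i, by omega⟩
  · intro h i; exact h i.1 (by omega)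

/-- two-sided gauge `⋂_{|i| ≤ R+2} α^i(N)`. -/
def gauge (α : MulAut G) (N : Subgroup G) (R : ℕ) : Subgroup G :=
  (⨅ i : Fin (R + 3), pre α i.1 N) ⊓ (⨅ i : Fin (R + 3), post α i.1 N)

theorem mem_gauge {α : MulAut G} {N : Subgroup G} {R : ℕ} {y : G} :
    y ∈ gauge α N R ↔ (∀ i, i ≤ R + 2 → (α ^ i) y ∈ N) ∧ (∀ i, i ≤ R + 2 → (α⁻¹ ^ i) y ∈ N) := by
  simp only [gauge, Subgroup.mem_inf, Subgroup.mem_iInf, mem_pre, mem_post]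
  constructor
  · rintro ⟨h1, h2⟩
    exact ⟨fun i hi => h1 ⟨i, by omega⟩, fun i hi => h2 ⟨i, by omega⟩⟩
  · rintro ⟨h1, h2⟩
    exact ⟨fun i => h1 i.1 (by omega), fun i => h2 i.1 (by omega)⟩

theorem normal_gauge {α : MulAut G} {N : Subgroup G} (hN : N.Normal) (R : ℕ) :
    (gauge α N R).Normal :=
  normal_inf (normal_iInf fun _ => normal_pre hN) (normal_iInf fun _ => normal_post hN)

/-- product of a subgroup with a normalizing subgroup is a subgroup. -/
def mulSubgroup (A B : Subgroup G) (h : ∀ b ∈ B, ∀ a ∈ A, b * a * b⁻¹ ∈ A) : Subgroup G where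
  carrier := (A : Set G) * (B : Set G)
  one_mem' := ⟨1, A.one_mem, 1, B.one_mem, one_mul 1⟩
  mul_mem' := by
    rintro x y ⟨a1, ha1, b1, hb1, rfl⟩ ⟨a2, ha2, b2, hb2, rfl⟩
    exact ⟨a1 * (b1 * a2 * b1⁻¹), A.mul_mem ha1 (h b1 hb1 a2 ha2),
      b1 * b2, B.mul_mem hb1 hb2, by group⟩
  inv_mem' := by
    rintro x ⟨a, ha, b, hb, rfl⟩
    refine ⟨b⁻¹ * a⁻¹ * b, ?_, b⁻¹, B.inv_mem hb, by group⟩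
    have := h b⁻¹ (B.inv_mem hb) a⁻¹ (A.inv_mem ha)
    simpa using this

theorem mem_mulSubgroup {A B : Subgroup G} {h} {y : G} :
    y ∈ mulSubgroup A B h ↔ ∃ a ∈ A, ∃ b ∈ B, a * b = y := Iff.rfl

end Grp

section Stab

variable [Group G] [TopologicalSpace G] [IsTopologicalGroup G]

/-- monotone or antitone chains of subgroups squeezed between `W` and a compact `M`,
with `W` relatively open in `M`, stabilize. -/
theorem stabilizes {M W : Subgroup G} (hM : IsCompact (M : Set G)) {V : Set G}
    (hVo : IsOpen V) (h1V : (1 : G) ∈ V) (hVW : ∀ y, y ∈ M → y ∈ V → y ∈ W) (hWM : W ≤ M)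
    {T : ℕ → Subgroup G} (hWT : ∀ j, W ≤ T j) (hTM : ∀ j, T j ≤ M)
    (hmono : (∀ i j, i ≤ j → T i ≤ T j) ∨ (∀ i j, i ≤ j → T j ≤ T i)) :
    ∃ K, ∀ j, K ≤ j → T j = T K := by
  classical
  -- finite cover of M by cosets of V
  have hcov : (M : Set G) ⊆ ⋃ m : ↥M, (fun y => (m : G)⁻¹ * y) ⁻¹' V := by
    intro y hy
    exact Set.mem_iUnion.2 ⟨⟨y, hy⟩, by simpa using h1V⟩
  obtain ⟨t, ht⟩ := hM.elim_finite_subcover (fun m : ↥M => (fun y => (m : G)⁻¹ * y) ⁻¹' V)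
    (fun m => hVo.preimage (continuous_const.mul continuous_id)) hcov
  set F : Finset G := t.image Subtype.val with hF
  have hFM : ∀ f ∈ F, f ∈ M := by
    intro f hf
    obtain ⟨m, _, rfl⟩ := Finset.mem_image.1 hf
    exact m.2
  have hFcov : ∀ y, y ∈ M → ∃ f ∈ F, f⁻¹ * y ∈ V := by
    intro y hy
    obtain ⟨m, hm, hmem⟩ := Set.mem_iUnion₂.1 (ht hy)
    exact ⟨(m : G), Finset.mem_image.2 ⟨m, hm, rfl⟩, hmem⟩
  set φ : ℕ → Finset G := fun j => F.filter (fun f => f ∈ T j) with hφ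
  have key : ∀ i j, φ i ⊆ φ j → T i ≤ T j := by
    intro i j hsub x hx
    have hxM : x ∈ M := hTM i hx
    obtain ⟨f, hfF, hfV⟩ := hFcov x hxM
    have hfW : f⁻¹ * x ∈ W := hVW _ (M.mul_mem (M.inv_mem (hFM f hfF)) hxM) hfV
    have hfTi : f ∈ T i := by
      have he : x * (f⁻¹ * x)⁻¹ = f := by group
      rw [← he]
      exact (T i).mul_mem hx ((T i).inv_mem (hWT i hfW))
    have hfφ : f ∈ φ i := Finset.mem_filter.2 ⟨hfF, hfTi⟩
    have hfTj : f ∈ T j := (Finset.mem_filter.1 (hsub hfφ)).2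
    have he2 : f * (f⁻¹ * x) = x := by group
    rw [← he2]
    exact (T j).mul_mem hfTj (hWT j hfW)
  rcases hmono with hmono | hanti
  · -- monotone
    have hφm : ∀ i j, i ≤ j → φ i ⊆ φ j := by
      intro i j hij f hf
      simp only [hφ, Finset.mem_filter] at hf ⊢
      exact ⟨hf.1, hmono i j hij hf.2⟩
    have hbdd : BddAbove (Set.range fun j => (φ j).card) := by
      refine ⟨F.card, ?_⟩
      rintro _ ⟨j, rfl⟩
      exact Finset.card_le_card (Finset.filter_subset _ _)
    obtain ⟨K, hK⟩ := Nat.sSup_mem (Set.range_nonempty fun j => (φ j).card) hbdd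
    have hK2 : (φ K).card = sSup (Set.range fun j => (φ j).card) := hK
    refine ⟨K, fun j hj => ?_⟩
    have h1 : φ K ⊆ φ j := hφm K j hj
    have h2 : (φ j).card ≤ (φ K).card := by
      rw [hK2]; exact le_csSup hbdd ⟨j, rfl⟩
    have : φ K = φ j := Finset.eq_of_subset_of_card_le h1 h2
    exact le_antisymm (key j K (this ▸ Finset.Subset.refl _)) (key K j (this ▸ Finset.Subset.refl _))
  · -- antitone
    have hφm : ∀ i j, i ≤ j → φ j ⊆ φ i := by
      intro i j hij f hf
      simp only [hφ, Finset.mem_filter] at hf ⊢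
      exact ⟨hf.1, hanti i j hij hf.2⟩
    obtain ⟨K, hK⟩ := Nat.sInf_mem (Set.range_nonempty fun j => (φ j).card)
    have hK2 : (φ K).card = sInf (Set.range fun j => (φ j).card) := hK
    refine ⟨K, fun j hj => ?_⟩
    have h1 : φ j ⊆ φ K := hφm K j hj
    have h2 : (φ K).card ≤ (φ j).card := by
      rw [hK2]; exact Nat.sInf_le ⟨j, rfl⟩
    have : φ j = φ K := Finset.eq_of_subset_of_card_le h1 h2
    exact le_antisymm (key j K (this ▸ Finset.Subset.refl _)) (key K j (this.symm ▸ Finset.Subset.refl _))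

end Stab


section Helpers

variable [Group G]

theorem pow_apply_add (α : MulAut G) (a b : ℕ) (x : G) :
    (α ^ (a + b)) x = (α ^ a) ((α ^ b) x) := by
  rw [pow_add, MulAut.mul_apply]

theorem invpow_apply_add (α : MulAut G) (a b : ℕ) (x : G) :
    (α⁻¹ ^ (a + b)) x = (α⁻¹ ^ a) ((α⁻¹ ^ b) x) := by
  rw [pow_add, MulAut.mul_apply]

theorem pow_invpow_cancel (α : MulAut G) (k : ℕ) (x : G) :
    (α ^ k) ((α⁻¹ ^ k) x) = x := by
  rw [inv_pow, ← MulAut.mul_apply, mul_inv_cancel, MulAut.one_apply]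

theorem invpow_pow_cancel (α : MulAut G) (k : ℕ) (x : G) :
    (α⁻¹ ^ k) ((α ^ k) x) = x := by
  rw [inv_pow, ← MulAut.mul_apply, inv_mul_cancel, MulAut.one_apply]

theorem aut_inv_cancel (α : MulAut G) (x : G) : α (α⁻¹ x) = x := by
  simpa [pow_one] using pow_invpow_cancel α 1 x

theorem inv_aut_cancel (α : MulAut G) (x : G) : α⁻¹ (α x) = x := by
  simpa [pow_one] using invpow_pow_cancel α 1 x

theorem pow_succ_apply (α : MulAut G) (n : ℕ) (x : G) :
    (α ^ (n + 1)) x = (α ^ n) (α x) := by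
  rw [pow_succ, MulAut.mul_apply]

theorem pow_succ_apply' (α : MulAut G) (n : ℕ) (x : G) :
    (α ^ (n + 1)) x = α ((α ^ n) x) := by
  rw [pow_succ', MulAut.mul_apply]

theorem invpow_succ_apply (α : MulAut G) (n : ℕ) (x : G) :
    (α⁻¹ ^ (n + 1)) x = (α⁻¹ ^ n) (α⁻¹ x) := by
  rw [pow_succ, MulAut.mul_apply]

theorem pow_apply_invpow_le (α : MulAut G) {a b : ℕ} (h : a ≤ b) (x : G) :
    (α ^ a) ((α⁻¹ ^ b) x) = (α⁻¹ ^ (b - a)) x := by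
  calc (α ^ a) ((α⁻¹ ^ b) x) = (α ^ a) ((α⁻¹ ^ a) ((α⁻¹ ^ (b - a)) x)) := by
        rw [← invpow_apply_add, Nat.add_sub_cancel' h]
  _ = (α⁻¹ ^ (b - a)) x := pow_invpow_cancel α a _

theorem invpow_apply_pow_le (α : MulAut G) {a b : ℕ} (h : a ≤ b) (x : G) :
    (α⁻¹ ^ a) ((α ^ b) x) = (α ^ (b - a)) x := by
  calc (α⁻¹ ^ a) ((α ^ b) x) = (α⁻¹ ^ a) ((α ^ a) ((α ^ (b - a)) x)) := by
        rw [← pow_apply_add, Nat.add_sub_cancel' h]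
  _ = (α ^ (b - a)) x := invpow_pow_cancel α a _

theorem pow_apply_invpow_ge (α : MulAut G) {a b : ℕ} (h : b ≤ a) (x : G) :
    (α ^ a) ((α⁻¹ ^ b) x) = (α ^ (a - b)) x := by
  calc (α ^ a) ((α⁻¹ ^ b) x) = (α ^ (a - b)) ((α ^ b) ((α⁻¹ ^ b) x)) := by
        rw [← pow_apply_add, Nat.sub_add_cancel h]
  _ = (α ^ (a - b)) x := by rw [pow_invpow_cancel]

theorem aut_apply_invpow_succ (α : MulAut G) (j : ℕ) (x : G) :
    α ((α⁻¹ ^ (j + 1)) x) = (α⁻¹ ^ j) x := by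
  have h := pow_apply_invpow_le α (show 1 ≤ j + 1 by omega) x
  simpa [pow_one] using h

end Helpers

section Top

variable [Group G] [TopologicalSpace G] [IsTopologicalGroup G]

theorem cont_pow {α : MulAut G} (hαc : Continuous ⇑α) : ∀ n : ℕ, Continuous ⇑(α ^ n)
  | 0 => by
      have h : ⇑((α : MulAut G) ^ 0) = id := funext fun x => by
        rw [pow_zero, MulAut.one_apply]; rfl
      rw [h]; exact continuous_id
  | (n + 1) => by
      have h : ⇑(α ^ (n + 1)) = ⇑(α ^ n) ∘ ⇑α := funext fun x => pow_succ_apply α n x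
      rw [h]; exact (cont_pow hαc n).comp hαc

/-- Every neighborhood of `1` in a profinite group contains an open normal subgroup. -/
theorem exists_openNormal_sub [CompactSpace G] [T2Space G] [TotallyDisconnectedSpace G]
    {U : Set G} (hU : U ∈ 𝓝 (1 : G)) :
    ∃ N : Subgroup G, N.Normal ∧ IsOpen (N : Set G) ∧ (N : Set G) ⊆ U := by
  obtain ⟨W, hWc, h1W, hWU⟩ := isTopologicalBasis_isClopen.mem_nhds_iff.1 hU
  obtain ⟨H, hH⟩ := IsTopologicalGroup.exist_openNormalSubgroup_sub_clopen_nhds_of_one hWc h1W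
  exact ⟨H.toSubgroup, H.isNormal', H.toOpenSubgroup.isOpen, fun x hx => hWU (hH hx)⟩

end Top

section Ext

variable [Group G] [TopologicalSpace G] [IsTopologicalGroup G] [CompactSpace G]

theorem isClosed_coe {N : Subgroup G} (hNo : IsOpen (N : Set G)) : IsClosed (N : Set G) :=
  N.isClosed_of_isOpen hNo

theorem coe_pre {α : MulAut G} {n : ℕ} {N : Subgroup G} :
    (pre α n N : Set G) = (⇑(α ^ n)) ⁻¹' (N : Set G) := by
  rw [pre, Subgroup.coe_comap, MulEquiv.coe_toMonoidHom]

theorem coe_post {α : MulAut G} {n : ℕ} {N : Subgroup G} :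
    (post α n N : Set G) = (⇑(α⁻¹ ^ n)) ⁻¹' (N : Set G) := by
  rw [post, Subgroup.coe_comap, MulEquiv.coe_toMonoidHom]

theorem isClosed_pre {α : MulAut G} (hαc : Continuous ⇑α) (n : ℕ) {N : Subgroup G}
    (hN : IsClosed (N : Set G)) : IsClosed (pre α n N : Set G) := by
  rw [coe_pre]; exact hN.preimage (cont_pow hαc n)

theorem isClosed_post {α : MulAut G} (hαc' : Continuous ⇑α⁻¹) (n : ℕ) {N : Subgroup G}
    (hN : IsClosed (N : Set G)) : IsClosed (post α n N : Set G) := by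
  rw [coe_post]; exact hN.preimage (cont_pow hαc' n)

theorem isOpen_pre {α : MulAut G} (hαc : Continuous ⇑α) (n : ℕ) {N : Subgroup G}
    (hN : IsOpen (N : Set G)) : IsOpen (pre α n N : Set G) := by
  rw [coe_pre]; exact hN.preimage (cont_pow hαc n)

theorem isOpen_post {α : MulAut G} (hαc' : Continuous ⇑α⁻¹) (n : ℕ) {N : Subgroup G}
    (hN : IsOpen (N : Set G)) : IsOpen (post α n N : Set G) := by
  rw [coe_post]; exact hN.preimage (cont_pow hαc' n)

theorem isOpen_gauge {α : MulAut G} (hαc : Continuous ⇑α) (hαc' : Continuous ⇑α⁻¹)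
    {N : Subgroup G} (hNo : IsOpen (N : Set G)) (R : ℕ) :
    IsOpen ((gauge α N R : Subgroup G) : Set G) := by
  have he : ((gauge α N R : Subgroup G) : Set G) =
      (⋂ i : Fin (R+3), (pre α i.1 N : Set G)) ∩
        ⋂ i : Fin (R+3), (post α i.1 N : Set G) := by
    ext y
    constructor
    · intro hy
      have h := mem_gauge.1 hy
      exact ⟨Set.mem_iInter.2 fun i => h.1 i.1 (by omega),
        Set.mem_iInter.2 fun i => h.2 i.1 (by omega)⟩
    · intro hy
      exact mem_gauge.2 ⟨fun i hi => Set.mem_iInter.1 hy.1 ⟨i, by omega⟩,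
        fun i hi => Set.mem_iInter.1 hy.2 ⟨i, by omega⟩⟩
  rw [he]
  refine IsOpen.inter ?_ ?_
  · exact isOpen_iInter_of_finite fun i => by
      rw [coe_pre]; exact hNo.preimage (cont_pow hαc i.1)
  · exact isOpen_iInter_of_finite fun i => by
      rw [coe_post]; exact hNo.preimage (cont_pow hαc' i.1)

/-- The extension lemma: a long enough run in `N` can be extended, modulo `N`,
to a full forward tail in `N`. -/
theorem extension (α : MulAut G) (hαc : Continuous ⇑α) (hαc' : Continuous ⇑α⁻¹)
    {N : Subgroup G} (hNn : N.Normal) (hNo : IsOpen (N : Set G)) :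
    ∃ K : ℕ, 1 ≤ K ∧ ∀ m y, (∀ n, m ≤ n → n ≤ m + K → (α ^ n) y ∈ N) →
      ∃ y', y'⁻¹ * y ∈ N ∧ ∀ n, m ≤ n → (α ^ n) y' ∈ N := by
  classical
  have hnormQ : ∀ j, ∀ b ∈ Qgrp α N j, ∀ a ∈ N, b * a * b⁻¹ ∈ N :=
    fun j b _ a ha => hNn.conj_mem a ha b
  set T : ℕ → Subgroup G := fun j => mulSubgroup N (Qgrp α N j) (hnormQ j) with hT
  have hWT : ∀ j, N ≤ T j := fun j a ha =>
    mem_mulSubgroup.2 ⟨a, ha, 1, (Qgrp α N j).one_mem, mul_one a⟩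
  have hanti : ∀ i j, i ≤ j → T j ≤ T i := by
    intro i j hij x hx
    obtain ⟨a, ha, b, hb, rfl⟩ := mem_mulSubgroup.1 hx
    exact mem_mulSubgroup.2 ⟨a, ha, b, Qgrp_anti hij hb, rfl⟩
  obtain ⟨K₀, hK₀⟩ := stabilizes (M := (⊤ : Subgroup G)) (W := N)
      (by rw [Subgroup.coe_top]; exact isCompact_univ)
      hNo N.one_mem (fun y _ hy => hy) le_top hWT (fun j => le_top) (Or.inr hanti)
  refine ⟨K₀ + 1, by omega, ?_⟩
  intro m y hwin
  set Z : ℕ → Set G := fun t =>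
    {z | z⁻¹ * y ∈ N ∧ ∀ n, m ≤ n → n ≤ m + (K₀+1) + t → (α ^ n) z ∈ N} with hZ
  have hZmem : ∀ t z, z ∈ Z t ↔
      (z⁻¹ * y ∈ N ∧ ∀ n, m ≤ n → n ≤ m + (K₀+1) + t → (α ^ n) z ∈ N) := fun t z => Iff.rfl
  have hZclosed : ∀ t, IsClosed (Z t) := by
    intro t
    have he : Z t = ((fun z => z⁻¹ * y) ⁻¹' (N : Set G)) ∩
        ⋂ (n : ℕ) (_ : m ≤ n) (_ : n ≤ m + (K₀+1) + t), (⇑(α ^ n)) ⁻¹' (N : Set G) := by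
      ext z
      simp only [hZ, Set.mem_setOf_eq, Set.mem_inter_iff, Set.mem_preimage, Set.mem_iInter,
        SetLike.mem_coe]
    rw [he]
    exact ((isClosed_coe hNo).preimage (continuous_id.inv.mul continuous_const)).inter
      (isClosed_iInter fun n => isClosed_iInter fun _ => isClosed_iInter fun _ =>
        (isClosed_coe hNo).preimage (cont_pow hαc n))
  have hZanti : ∀ t, Z (t+1) ⊆ Z t := by
    intro t z hz
    exact ⟨hz.1, fun n h1 h2 => hz.2 n h1 (by omega)⟩
  have hZne : ∀ t, (Z t).Nonempty := by
    intro t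
    induction t with
    | zero =>
      exact ⟨y, by simpa using N.one_mem, fun n h1 h2 => hwin n h1 (by omega)⟩
    | succ t ih =>
      obtain ⟨z, hzc, hzw⟩ := ih
      set j : ℕ := m + (K₀ + 1) + t + 1 with hj
      set zf : G := (α ^ j) z with hzf
      have hzQK : zf ∈ Qgrp α N (K₀ + 1) := by
        rw [mem_Qgrp]
        intro i h1 hi
        have hij : i ≤ j := by omega
        rw [hzf, invpow_apply_pow_le α hij]
        exact hzw (j - i) (by omega) (by omega)
      have hzT : zf ∈ T j := by
        have h1 : zf ∈ T (K₀ + 1) := mem_mulSubgroup.2 ⟨1, N.one_mem, zf, hzQK, one_mul zf⟩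
        rwa [hK₀ (K₀+1) (by omega), ← hK₀ j (by omega)] at h1
      obtain ⟨n₀, hn₀, w, hw, hmul⟩ := mem_mulSubgroup.1 hzT
      set u : G := (α⁻¹ ^ j) w with hu
      have huN : u ∈ N := by
        rw [hu]
        exact mem_Qgrp.1 hw j (by omega) le_rfl
      refine ⟨u⁻¹ * z, ?_, ?_⟩
      · have he : (u⁻¹ * z)⁻¹ * y = (z⁻¹ * u * z) * (z⁻¹ * y) := by group
        rw [he]
        refine N.mul_mem ?_ hzc
        have h6 := hNn.conj_mem u huN z⁻¹
        simpa using h6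
      · intro n h1 h2
        have hmain : (α ^ n) (u⁻¹ * z) = ((α ^ n) u)⁻¹ * (α ^ n) z := by
          rw [map_mul, map_inv]
        rcases Nat.lt_or_ge n j with hlt | hge
        · rw [hmain]
          have h3 : (α ^ n) u = (α⁻¹ ^ (j - n)) w := by
            rw [hu, pow_apply_invpow_le α (by omega)]
          have h4 : (α ^ n) u ∈ N := by
            rw [h3]; exact mem_Qgrp.1 hw (j - n) (by omega) (by omega)
          exact N.mul_mem (N.inv_mem h4) (hzw n h1 (by omega))
        · have hn : n = j := by omega
          rw [hmain, hn]
          have h5 : (α ^ j) u = w := by rw [hu, pow_invpow_cancel]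
          rw [h5, ← hzf, ← hmul]
          have h7 := hNn.conj_mem n₀ hn₀ w⁻¹
          simpa [mul_assoc] using h7
  have hZcpt : IsCompact (Z 0) := (hZclosed 0).isCompact
  obtain ⟨y', hy'⟩ := IsCompact.nonempty_iInter_of_sequence_nonempty_isCompact_isClosed
    Z hZanti hZne hZcpt hZclosed
  have hy'' : ∀ t, y' ∈ Z t := Set.mem_iInter.1 hy'
  refine ⟨y', (hy'' 0).1, ?_⟩
  intro n hn
  exact (hy'' n).2 n hn (by omega)

end Ext


section Dagger

variable [Group G] [TopologicalSpace G] [IsTopologicalGroup G] [CompactSpace G]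

/-- Statement (†): there is `m₀` such that every coset of `N` contains an element whose
forward orbit from time `m₀` on lies in `N`. Needs topological transitivity. -/
theorem dagger (α : MulAut G) (hαc : Continuous ⇑α) (hαc' : Continuous ⇑α⁻¹)
    (htt : ∃ x : G, Dense (Set.range fun n : ℤ => (α ^ n) x))
    {N : Subgroup G} (hNn : N.Normal) (hNo : IsOpen (N : Set G)) :
    ∃ m₀ : ℕ, ∀ g : G, ∃ c, g⁻¹ * c ∈ N ∧ ∀ n, m₀ ≤ n → (α ^ n) c ∈ N := by
  classical
  obtain ⟨K, hK1, hext⟩ := extension α hαc hαc' hNn hNo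
  set D : Subgroup G := Wwin α N K with hD
  have hDopen : IsOpen (D : Set G) := by
    have he : (D : Set G) = ⋂ i : Fin (K+1), (pre α i.1 N : Set G) := by
      rw [hD, Wwin, Subgroup.coe_iInf]
    rw [he]
    exact isOpen_iInter_of_finite fun i => isOpen_pre hαc i.1 hNo
  set Lam : Subgroup G := ⨆ m : ℕ, pre α (m + 1) D with hLam
  have hLopen : IsOpen (Lam : Set G) := by
    refine Subgroup.isOpen_mono (le_iSup (fun m => pre α (m+1) D) 0) ?_
    exact isOpen_pre hαc 1 hDopen
  set β : G →* G := ((α⁻¹ : MulAut G) : G ≃* G).toMonoidHom with hβ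
  have hβapp : ∀ y : G, β y = α⁻¹ y := fun y => rfl
  have hsub : Lam ≤ Lam.comap β := by
    refine iSup_le fun m => ?_
    intro y hy
    rw [Subgroup.mem_comap]
    have hmem : β y ∈ pre α (m + 1 + 1) D := by
      rw [mem_pre]
      have he : (α ^ (m + 1 + 1)) (β y) = (α ^ (m + 1)) y := by
        rw [hβapp, pow_succ_apply α (m+1) (α⁻¹ y), aut_inv_cancel]
      rw [he]
      exact mem_pre.1 hy
    exact (le_iSup (fun m => pre α (m+1) D) (m+1)) hmem
  haveI hfinq := Lam.quotient_finite_of_isOpen hLopen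
  haveI hfin : Lam.FiniteIndex := Lam.finiteIndex_of_finite_quotient
  have hβsurj : Function.Surjective ⇑β := fun y => ⟨α y, by rw [hβapp, inv_aut_cancel]⟩
  have hidx : (Lam.comap β).index = Lam.index :=
    Lam.index_comap_of_surjective hβsurj
  have heq : Lam.comap β = Lam := by
    have h1 := Subgroup.relIndex_mul_index hsub
    rw [hidx] at h1
    have h2 : Lam.index ≠ 0 := hfin.index_ne_zero
    have h1' : Lam.relIndex (Lam.comap β) * Lam.index = 1 * Lam.index := by
      rw [one_mul]; exact h1
    have h3 : Lam.relIndex (Lam.comap β) = 1 :=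
      Nat.eq_of_mul_eq_mul_right (Nat.pos_of_ne_zero h2) h1'
    exact le_antisymm (Subgroup.relIndex_eq_one.1 h3) hsub
  have hmemiff : ∀ y : G, y ∈ Lam ↔ α⁻¹ y ∈ Lam := by
    intro y
    constructor
    · intro h
      have h4 := hsub h
      rwa [Subgroup.mem_comap, hβapp] at h4
    · intro h
      have h4 : y ∈ Lam.comap β := by
        rw [Subgroup.mem_comap, hβapp]; exact h
      rwa [heq] at h4
  have hA : ∀ y, y ∈ Lam → α y ∈ Lam := fun y h =>
    (hmemiff (α y)).2 (by rwa [inv_aut_cancel])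
  have hB : ∀ y, y ∈ Lam → α⁻¹ y ∈ Lam := fun y h => (hmemiff y).1 h
  have hz : ∀ (j : ℤ) (y : G), y ∈ Lam → (α ^ j) y ∈ Lam := by
    intro j
    induction j using Int.induction_on with
    | zero => intro y hy; simpa using hy
    | succ k ih =>
      intro y hy
      have he : (α ^ ((k : ℤ) + 1)) y = (α ^ (k : ℤ)) (α y) := by
        rw [zpow_add_one, MulAut.mul_apply]
      rw [he]
      exact ih (α y) (hA y hy)
    | pred k ih =>
      intro y hy
      have he : (α ^ (-(k : ℤ) - 1)) y = (α ^ (-(k : ℤ))) (α⁻¹ y) := by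
        rw [zpow_sub_one, MulAut.mul_apply]
      rw [he]
      exact ih (α⁻¹ y) (hB y hy)
  have hLtop : ∀ g : G, g ∈ Lam := by
    obtain ⟨x, hx⟩ := htt
    obtain ⟨z0, hz0r, hz0L⟩ := hx.exists_mem_open hLopen ⟨1, Lam.one_mem⟩
    obtain ⟨n₀, hn₀⟩ := hz0r
    intro g
    have hOopen : IsOpen ((fun y => g⁻¹ * y) ⁻¹' (Lam : Set G)) :=
      hLopen.preimage (continuous_const.mul continuous_id)
    have hOne : ((fun y => g⁻¹ * y) ⁻¹' (Lam : Set G)).Nonempty :=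
      ⟨g, by simpa using Lam.one_mem⟩
    obtain ⟨z1, hz1r, hz1O⟩ := hx.exists_mem_open hOopen hOne
    obtain ⟨n₁, hn₁⟩ := hz1r
    have hx0 : (α ^ (n₀ : ℤ)) x ∈ Lam := by
      have : z0 ∈ Lam := hz0L
      rwa [← hn₀] at this
    have hx1 : (α ^ (n₁ : ℤ)) x ∈ Lam := by
      have he : (α ^ (n₁ : ℤ)) x = (α ^ (n₁ - n₀)) ((α ^ (n₀ : ℤ)) x) := by
        rw [← MulAut.mul_apply, ← zpow_add, sub_add_cancel]
      rw [he]
      exact hz (n₁ - n₀) _ hx0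
    have hgz : g⁻¹ * (α ^ (n₁ : ℤ)) x ∈ Lam := by
      have : g⁻¹ * z1 ∈ Lam := hz1O
      rwa [← hn₁] at this
    have he2 : g = ((α ^ (n₁ : ℤ)) x) * (g⁻¹ * (α ^ (n₁ : ℤ)) x)⁻¹ := by group
    rw [he2]
    exact Lam.mul_mem hx1 (Lam.inv_mem hgz)
  have hnormC : ∀ j, ∀ b ∈ Cgrp α N j, ∀ a ∈ N, b * a * b⁻¹ ∈ N :=
    fun j b _ a ha => hNn.conj_mem a ha b
  set P : ℕ → Subgroup G := fun j => mulSubgroup N (Cgrp α N j) (hnormC j) with hP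
  have hPmono : ∀ i j, i ≤ j → P i ≤ P j := by
    intro i j hij x hx
    obtain ⟨a, ha, b, hb, rfl⟩ := mem_mulSubgroup.1 hx
    exact mem_mulSubgroup.2 ⟨a, ha, b, Cgrp_mono hij hb, rfl⟩
  have hLP : Lam ≤ ⨆ j, P j := by
    refine iSup_le fun m => ?_
    intro y hy
    have hyD : (α ^ (m+1)) y ∈ D := mem_pre.1 hy
    have hwin : ∀ n, m + 1 ≤ n → n ≤ m + 1 + K → (α ^ n) y ∈ N := by
      intro n h1 h2
      have h3 := mem_Wwin.1 hyD (n - (m+1)) (by omega)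
      have h4 : (α ^ (n - (m+1) + (m+1))) y = (α ^ (n - (m+1))) ((α ^ (m+1)) y) :=
        pow_apply_add α (n - (m+1)) (m+1) y
      rw [← h4, show n - (m+1) + (m+1) = n from by omega] at h3
      exact h3
    obtain ⟨y', hy'c, hy't⟩ := hext (m+1) y hwin
    have hyP : y ∈ P (m+1) := by
      refine mem_mulSubgroup.2 ⟨y' * (y'⁻¹ * y) * y'⁻¹, ?_, y', ?_, by group⟩
      · have h5 := hNn.conj_mem _ hy'c y'
        simpa [mul_assoc] using h5
      · exact mem_Cgrp.2 hy't
    exact le_iSup P (m+1) hyP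
  have hWP : ∀ j, N ≤ P j := fun j a ha =>
    mem_mulSubgroup.2 ⟨a, ha, 1, (Cgrp α N j).one_mem, mul_one a⟩
  obtain ⟨K₁, hK₁⟩ := stabilizes (M := (⊤ : Subgroup G)) (W := N)
      (by rw [Subgroup.coe_top]; exact isCompact_univ)
      hNo N.one_mem (fun y _ hy => hy) le_top hWP (fun j => le_top) (Or.inl hPmono)
  refine ⟨K₁, fun g => ?_⟩
  have hgsup : g ∈ ⨆ j, P j := hLP (hLtop g)
  have hdir : Directed (· ≤ ·) P := fun i j =>
    ⟨max i j, hPmono i _ (le_max_left _ _), hPmono j _ (le_max_right _ _)⟩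
  obtain ⟨j, hj⟩ := (Subgroup.mem_iSup_of_directed hdir).1 hgsup
  have hgP : g ∈ P K₁ := by
    have h1 : g ∈ P (max j K₁) := hPmono j _ (le_max_left _ _) hj
    rwa [hK₁ (max j K₁) (le_max_right _ _)] at h1
  obtain ⟨a, ha, c, hc, hac⟩ := mem_mulSubgroup.1 hgP
  refine ⟨c, ?_, fun n hn => mem_Cgrp.1 hc n hn⟩
  have hca : c = a⁻¹ * g := by rw [← hac]; group
  rw [hca]
  have h6 := hNn.conj_mem a⁻¹ (N.inv_mem ha) g⁻¹
  simpa [mul_assoc] using h6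

end Dagger


section Shadow

variable [Group G] [TopologicalSpace G] [IsTopologicalGroup G] [CompactSpace G]

theorem pow_mem_inv_subgroup {α : MulAut G} {M : Subgroup G} (hMa : ∀ y ∈ M, α y ∈ M) :
    ∀ (k : ℕ) (y : G), y ∈ M → (α ^ k) y ∈ M := by
  intro k
  induction k with
  | zero => intro y hy; simpa using hy
  | succ k ih =>
    intro y hy
    rw [pow_succ_apply' α k y]
    exact hMa _ (ih y hy)

/-- Shadowing lemma: an asymptotic pseudo-orbit in a compact invariant subgroup `M`,
with gauge-small errors, beginning with an honest backward orbit segment,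
is `N`-shadowed by a genuine orbit of a point of `M`. -/
theorem shadow (α : MulAut G) (hαc : Continuous ⇑α) (hαc' : Continuous ⇑α⁻¹)
    {M : Subgroup G} (hMcl : IsClosed (M : Set G))
    (hMa : ∀ y ∈ M, α y ∈ M) (hMb : ∀ y ∈ M, α⁻¹ y ∈ M)
    {N : Subgroup G} (hNn : N.Normal) (hNo : IsOpen (N : Set G)) :
    ∃ R : ℕ, ∀ μ : ℕ → G, (∀ n, μ n ∈ M) →
      (∀ n, n ≤ R + 1 → μ n = (α⁻¹ ^ (R + 1 - n)) (μ (R + 1))) →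
      (∀ n, (α (μ n))⁻¹ * μ (n + 1) ∈ gauge α N R) →
      ∃ ν, ν ∈ M ∧ ∀ n, (μ n)⁻¹ * ((α ^ n) ν) ∈ N := by
  classical
  have hMaPow := pow_mem_inv_subgroup (α := α) (M := M) hMa
  have hMbPow := pow_mem_inv_subgroup (α := α⁻¹) (M := M) hMb
  set W : Subgroup G := M ⊓ N with hW
  have hWle : W ≤ N := inf_le_right
  have hWleM : W ≤ M := inf_le_left
  have hWcl : IsClosed (W : Set G) := by
    rw [hW, Subgroup.coe_inf]
    exact hMcl.inter (isClosed_coe hNo)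
  have hnorm : ∀ j, ∀ b ∈ M ⊓ Qgrp α N j, ∀ a ∈ W, b * a * b⁻¹ ∈ W := by
    intro j b hb a haW
    refine Subgroup.mem_inf.2 ⟨?_, ?_⟩
    · exact M.mul_mem (M.mul_mem (Subgroup.mem_inf.1 hb).1 (Subgroup.mem_inf.1 haW).1)
        (M.inv_mem (Subgroup.mem_inf.1 hb).1)
    · exact hNn.conj_mem a (Subgroup.mem_inf.1 haW).2 b
  set S : ℕ → Subgroup G := fun j => mulSubgroup W (M ⊓ Qgrp α N j) (hnorm j) with hS
  have hWS : ∀ j, W ≤ S j := fun j a ha =>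
    mem_mulSubgroup.2 ⟨a, ha, 1, Subgroup.one_mem _, mul_one a⟩
  have hSM : ∀ j, S j ≤ M := by
    intro j x hx
    obtain ⟨a, ha, b, hb, rfl⟩ := mem_mulSubgroup.1 hx
    exact M.mul_mem (Subgroup.mem_inf.1 ha).1 (Subgroup.mem_inf.1 hb).1
  have hanti : ∀ i j, i ≤ j → S j ≤ S i := by
    intro i j hij x hx
    obtain ⟨a, ha, b, hb, rfl⟩ := mem_mulSubgroup.1 hx
    exact mem_mulSubgroup.2 ⟨a, ha, b, Subgroup.mem_inf.2
      ⟨(Subgroup.mem_inf.1 hb).1, Qgrp_anti hij (Subgroup.mem_inf.1 hb).2⟩, rfl⟩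
  obtain ⟨K₀, hK₀⟩ := stabilizes (M := M) (W := W) hMcl.isCompact hNo N.one_mem
      (fun y hyM hyN => Subgroup.mem_inf.2 ⟨hyM, hyN⟩) hWleM hWS hSM (Or.inr hanti)
  refine ⟨K₀ + 1, ?_⟩
  intro μ hμM hpad herr
  set R : ℕ := K₀ + 1 with hR
  have hback : ∀ i, i ≤ R + 2 → ∀ n, (μ n)⁻¹ * (α⁻¹ ^ i) (μ (n + i)) ∈ N := by
    intro i
    induction i with
    | zero => intro _ n; simpa using N.one_mem
    | succ i ih =>
      intro hi n
      have hε := herr (n + i)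
      set ε : G := (α (μ (n + i)))⁻¹ * μ (n + i + 1) with hε'
      have hμe : μ (n + i + 1) = α (μ (n + i)) * ε := by rw [hε']; group
      have h2 : (α⁻¹ ^ (i+1)) (α (μ (n+i))) = (α⁻¹ ^ i) (μ (n+i)) := by
        rw [pow_succ, MulAut.mul_apply, inv_aut_cancel]
      have he1 : (α⁻¹ ^ (i+1)) (μ (n + (i+1))) = (α⁻¹ ^ i) (μ (n + i)) * (α⁻¹ ^ (i+1)) ε := by
        rw [show n + (i + 1) = n + i + 1 from by omega, hμe, map_mul, h2]
      have hεg : (α⁻¹ ^ (i+1)) ε ∈ N := (mem_gauge.1 hε).2 (i+1) (by omega)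
      have he2 : (μ n)⁻¹ * (α⁻¹ ^ (i+1)) (μ (n + (i+1))) =
          ((μ n)⁻¹ * (α⁻¹ ^ i) (μ (n+i))) * (α⁻¹ ^ (i+1)) ε := by
        rw [he1]; group
      rw [he2]
      exact N.mul_mem (ih (by omega) n) hεg
  set Zt : ℕ → Set G := fun t =>
    {ν | ν ∈ M ∧ ∀ n, n ≤ R + 1 + t → (μ n)⁻¹ * (α ^ n) ν ∈ W} with hZt
  have hZne : ∀ t, (Zt t).Nonempty := by
    intro t
    induction t with
    | zero =>
      refine ⟨μ 0, hμM 0, ?_⟩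
      intro n hn
      have h0 : μ 0 = (α⁻¹ ^ (R + 1)) (μ (R + 1)) := by
        have h1 := hpad 0 (by omega)
        simpa using h1
      have h1 : (α ^ n) (μ 0) = μ n := by
        rw [h0, pow_apply_invpow_le α (by omega : n ≤ R + 1)]
        exact (hpad n (by omega)).symm
      rw [h1]
      simpa using W.one_mem
    | succ t ih =>
      obtain ⟨ν, hνM, hνw⟩ := ih
      set f : ℕ := R + 2 + t with hf
      set ζ : G := ((α ^ f) ν)⁻¹ * μ f with hζ
      have hζM : ζ ∈ M := M.mul_mem (M.inv_mem (hMaPow f ν hνM)) (hμM f)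
      have hζQ : ζ ∈ Qgrp α N (R + 1) := by
        rw [mem_Qgrp]
        intro i h1 hi
        have hif : i ≤ f := by omega
        have he1 : (α⁻¹ ^ i) ζ = ((α ^ (f - i)) ν)⁻¹ * (α⁻¹ ^ i) (μ f) := by
          rw [hζ, map_mul, map_inv, invpow_apply_pow_le α hif]
        have hw := hνw (f - i) (by omega)
        have hback' := hback i (by omega) (f - i)
        rw [show f - i + i = f from by omega] at hback'
        have he2 : (α⁻¹ ^ i) ζ = ((μ (f - i))⁻¹ * (α ^ (f - i)) ν)⁻¹ *
            ((μ (f - i))⁻¹ * (α⁻¹ ^ i) (μ f)) := by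
          rw [he1]; group
        rw [he2]
        exact N.mul_mem (N.inv_mem (hWle hw)) hback'
      have hζS : ζ ∈ S (R + 1) :=
        mem_mulSubgroup.2 ⟨1, W.one_mem, ζ, Subgroup.mem_inf.2 ⟨hζM, hζQ⟩, one_mul ζ⟩
      have hζS' : ζ ∈ S (f + R + 1) := by
        rwa [hK₀ (R+1) (by omega), ← hK₀ (f + R + 1) (by omega)] at hζS
      obtain ⟨w', hw', q, hq, hq'⟩ := mem_mulSubgroup.1 hζS'
      have hqM : q ∈ M := (Subgroup.mem_inf.1 hq).1
      have hqQ : q ∈ Qgrp α N (f + R + 1) := (Subgroup.mem_inf.1 hq).2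
      set δ : G := (α⁻¹ ^ f) q with hδ
      have hδM : δ ∈ M := hMbPow f q hqM
      refine ⟨ν * δ, M.mul_mem hνM hδM, ?_⟩
      intro n hn
      rcases Nat.lt_or_ge n f with hlt | hge
      · have hδn : (α ^ n) δ ∈ W := by
          have he3 : (α ^ n) δ = (α⁻¹ ^ (f - n)) q := by
            rw [hδ, pow_apply_invpow_le α (by omega)]
          refine Subgroup.mem_inf.2 ⟨?_, ?_⟩
          · rw [he3]; exact hMbPow (f - n) q hqM
          · rw [he3]
            exact mem_Qgrp.1 hqQ (f - n) (by omega) (by omega)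
        have he4 : (μ n)⁻¹ * (α ^ n) (ν * δ) = ((μ n)⁻¹ * (α ^ n) ν) * (α ^ n) δ := by
          rw [map_mul]; group
        rw [he4]
        exact W.mul_mem (hνw n (by omega)) hδn
      · have hn' : n = f := by omega
        have he5 : (α ^ f) δ = q := by rw [hδ, pow_invpow_cancel]
        have hq'' : q = w'⁻¹ * ζ := by rw [← hq']; group
        have he6 : (μ f)⁻¹ * (α ^ f) (ν * δ) = ζ⁻¹ * w'⁻¹ * ζ := by
          rw [map_mul, he5, hq'', hζ]; group
        rw [hn', he6]
        have hMpart : ζ⁻¹ * w'⁻¹ * ζ ∈ M :=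
          M.mul_mem (M.mul_mem (M.inv_mem hζM) (M.inv_mem (hWleM hw'))) hζM
        have hNpart : ζ⁻¹ * w'⁻¹ * ζ ∈ N := by
          have h8 := hNn.conj_mem w'⁻¹ (N.inv_mem (hWle hw')) ζ⁻¹
          simpa using h8
        exact Subgroup.mem_inf.2 ⟨hMpart, hNpart⟩
  have hZcl : ∀ t, IsClosed (Zt t) := by
    intro t
    have he : Zt t = (M : Set G) ∩ ⋂ (n : ℕ) (_ : n ≤ R + 1 + t),
        (fun ν => (μ n)⁻¹ * (α ^ n) ν) ⁻¹' (W : Set G) := by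
      ext ν
      simp only [hZt, Set.mem_setOf_eq, Set.mem_inter_iff, Set.mem_iInter, Set.mem_preimage,
        SetLike.mem_coe]
    rw [he]
    exact hMcl.inter (isClosed_iInter fun n => isClosed_iInter fun _ =>
      hWcl.preimage (continuous_const.mul (cont_pow hαc n)))
  have hZanti : ∀ t, Zt (t+1) ⊆ Zt t := by
    intro t ν hν
    exact ⟨hν.1, fun n hn => hν.2 n (by omega)⟩
  obtain ⟨ν, hν⟩ := IsCompact.nonempty_iInter_of_sequence_nonempty_isCompact_isClosed
    Zt hZanti hZne (hZcl 0).isCompact hZcl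
  have hν' : ∀ t, ν ∈ Zt t := Set.mem_iInter.1 hν
  exact ⟨ν, (hν' 0).1, fun n => hWle ((hν' n).2 n (by omega))⟩

end Shadow


section Assemble

variable [Group G] [TopologicalSpace G] [IsTopologicalGroup G] [CompactSpace G]

/-- constraint sets -/
def Yset (α : MulAut G) (g : G) (N₀ : Subgroup G) (q : Set (Subgroup G × ℕ)) : Set G :=
  {y | g⁻¹ * y ∈ N₀ ∧ ∀ P ∈ q, ∀ n, P.2 ≤ n → (α ^ n) y ∈ P.1}

theorem Yset_anti (α : MulAut G) (g : G) (N₀ : Subgroup G) {q q' : Set (Subgroup G × ℕ)}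
    (h : q ⊆ q') : Yset α g N₀ q' ⊆ Yset α g N₀ q :=
  fun y hy => ⟨hy.1, fun P hP => hy.2 P (h hP)⟩

theorem isClosed_Yset (α : MulAut G) (hαc : Continuous ⇑α) (g : G) {N₀ : Subgroup G}
    (hN₀o : IsOpen (N₀ : Set G)) {q : Set (Subgroup G × ℕ)}
    (hq : ∀ P ∈ q, IsOpen ((P.1 : Set G))) :
    IsClosed (Yset α g N₀ q) := by
  have he : Yset α g N₀ q = ((fun y => g⁻¹ * y) ⁻¹' (N₀ : Set G)) ∩
      ⋂ (P : Subgroup G × ℕ) (_ : P ∈ q) (n : ℕ) (_ : P.2 ≤ n),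
        (⇑(α ^ n)) ⁻¹' ((P.1 : Set G)) := by
    ext y
    simp only [Yset, Set.mem_setOf_eq, Set.mem_inter_iff, Set.mem_preimage, Set.mem_iInter,
      SetLike.mem_coe]
  rw [he]
  exact ((isClosed_coe hN₀o).preimage (continuous_const.mul continuous_id)).inter
    (isClosed_iInter fun P => isClosed_iInter fun hP => isClosed_iInter fun n =>
      isClosed_iInter fun _ => (isClosed_coe (hq P hP)).preimage (cont_pow hαc n))

theorem tail_into (α : MulAut G) (hαc : Continuous ⇑α) (hαc' : Continuous ⇑α⁻¹)
    {q : Set (Subgroup G × ℕ)} (hqcl : ∀ P ∈ q, IsClosed ((P.1 : Set G)))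
    {y : G} (hy : ∀ P ∈ q, ∀ n, P.2 ≤ n → (α ^ n) y ∈ P.1)
    {U : Set G} (hUo : IsOpen U)
    (hMU : ∀ z : G, (∀ P ∈ q, ∀ k : ℕ, (α ^ k) z ∈ P.1 ∧ (α⁻¹ ^ k) z ∈ P.1) → z ∈ U) :
    ∃ m, ∀ n, m ≤ n → (α ^ n) y ∈ U := by
  by_contra hcon
  push_neg at hcon
  set E : ℕ → Set G := fun T =>
    closure ((fun n => (α ^ n) y) '' {n | T ≤ n ∧ (α ^ n) y ∉ U}) with hE
  have hEne : ∀ T, (E T).Nonempty := by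
    intro T
    obtain ⟨n, hn1, hn2⟩ := hcon T
    exact ⟨(α ^ n) y, subset_closure ⟨n, ⟨hn1, hn2⟩, rfl⟩⟩
  have hEcl : ∀ T, IsClosed (E T) := fun T => isClosed_closure
  have hEanti : ∀ T, E (T+1) ⊆ E T := fun T =>
    closure_mono (Set.image_mono (fun n hn => ⟨by have := hn.1; omega, hn.2⟩))
  obtain ⟨z, hz⟩ := IsCompact.nonempty_iInter_of_sequence_nonempty_isCompact_isClosed
    E hEanti hEne (hEcl 0).isCompact hEcl
  have hz' : ∀ T, z ∈ E T := Set.mem_iInter.1 hz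
  have hzU : z ∉ U := by
    have h1 : E 0 ⊆ Uᶜ := by
      refine closure_minimal ?_ (isClosed_compl_iff.2 hUo)
      rintro _ ⟨n, hn, rfl⟩
      exact hn.2
    exact h1 (hz' 0)
  refine hzU (hMU z ?_)
  intro P hP k
  constructor
  · have hsub : (fun n => (α ^ n) y) '' {n | P.2 ≤ n ∧ (α ^ n) y ∉ U} ⊆
        (⇑(α ^ k)) ⁻¹' ((P.1 : Set G)) := by
      rintro _ ⟨n, hn, rfl⟩
      simp only [Set.mem_preimage, SetLike.mem_coe]
      rw [← pow_apply_add]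
      exact hy P hP (k + n) (by have := hn.1; omega)
    have h2 : E P.2 ⊆ (⇑(α ^ k)) ⁻¹' ((P.1 : Set G)) :=
      closure_minimal hsub ((hqcl P hP).preimage (cont_pow hαc k))
    exact h2 (hz' P.2)
  · have hsub : (fun n => (α ^ n) y) '' {n | P.2 + k ≤ n ∧ (α ^ n) y ∉ U} ⊆
        (⇑(α⁻¹ ^ k)) ⁻¹' ((P.1 : Set G)) := by
      rintro _ ⟨n, hn, rfl⟩
      simp only [Set.mem_preimage, SetLike.mem_coe]
      have hkn := hn.1
      rw [invpow_apply_pow_le α (by omega : k ≤ n)]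
      exact hy P hP (n - k) (by omega)
    have h2 : E (P.2 + k) ⊆ (⇑(α⁻¹ ^ k)) ⁻¹' ((P.1 : Set G)) :=
      closure_minimal hsub ((hqcl P hP).preimage (cont_pow hαc' k))
    exact h2 (hz' (P.2 + k))

theorem successor (α : MulAut G) (hαc : Continuous ⇑α) (hαc' : Continuous ⇑α⁻¹)
    {g : G} {N₀ : Subgroup G} {m₀ : ℕ} {q : Set (Subgroup G × ℕ)}
    (hgood : ∀ P ∈ q, P.1.Normal ∧ IsOpen ((P.1 : Set G)) ∧ P.1 ≤ N₀)
    (hbase : ((N₀ : Subgroup G), m₀) ∈ q)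
    (hYne : (Yset α g N₀ q).Nonempty)
    {N : Subgroup G} (hNn : N.Normal) (hNo : IsOpen (N : Set G)) :
    ∃ m, (Yset α g N₀ (insert (N, m) q)).Nonempty := by
  classical
  obtain ⟨y, hyc, hyt⟩ := hYne
  set Mq : Subgroup G :=
    ⨅ (P : Subgroup G × ℕ) (_ : P ∈ q) (k : ℕ), (pre α k P.1 ⊓ post α k P.1) with hMq
  have hMqmem : ∀ z : G, z ∈ Mq ↔
      ∀ P ∈ q, ∀ k : ℕ, (α ^ k) z ∈ P.1 ∧ (α⁻¹ ^ k) z ∈ P.1 := by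
    intro z
    simp only [hMq, Subgroup.mem_iInf, Subgroup.mem_inf, mem_pre, mem_post]
  have hMqa : ∀ z ∈ Mq, α z ∈ Mq := by
    intro z hz
    rw [hMqmem] at hz ⊢
    intro P hP k
    constructor
    · have h1 : (α ^ k) (α z) = (α ^ (k+1)) z := (pow_succ_apply α k z).symm
      rw [h1]; exact (hz P hP (k+1)).1
    · cases k with
      | zero =>
        simp only [pow_zero, MulAut.one_apply]
        have h2 := (hz P hP 1).1
        rwa [pow_one] at h2
      | succ k =>
        have h3 : (α⁻¹ ^ (k+1)) (α z) = (α⁻¹ ^ k) z := by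
          rw [pow_succ, MulAut.mul_apply, inv_aut_cancel]
        rw [h3]; exact (hz P hP k).2
  have hMqb : ∀ z ∈ Mq, α⁻¹ z ∈ Mq := by
    intro z hz
    rw [hMqmem] at hz ⊢
    intro P hP k
    constructor
    · cases k with
      | zero =>
        simp only [pow_zero, MulAut.one_apply]
        have h2 := (hz P hP 1).2
        rwa [pow_one] at h2
      | succ k =>
        have h3 : (α ^ (k+1)) (α⁻¹ z) = (α ^ k) z := by
          rw [pow_succ, MulAut.mul_apply, aut_inv_cancel]
        rw [h3]; exact (hz P hP k).1
    · have h1 : (α⁻¹ ^ k) (α⁻¹ z) = (α⁻¹ ^ (k+1)) z := (pow_succ_apply α⁻¹ k z).symm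
      rw [h1]; exact (hz P hP (k+1)).2
  have hMqcl : IsClosed (Mq : Set G) := by
    have he : (Mq : Set G) = ⋂ (P : Subgroup G × ℕ) (_ : P ∈ q) (k : ℕ),
        ((pre α k P.1 ⊓ post α k P.1 : Subgroup G) : Set G) := by
      rw [hMq]
      simp only [Subgroup.coe_iInf]
    rw [he]
    refine isClosed_iInter fun P => isClosed_iInter fun hP => isClosed_iInter fun k => ?_
    rw [Subgroup.coe_inf]
    exact (isClosed_pre hαc k (isClosed_coe (hgood P hP).2.1)).inter
      (isClosed_post hαc' k (isClosed_coe (hgood P hP).2.1))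
  have hMqle : ∀ P ∈ q, Mq ≤ P.1 := by
    intro P hP z hz
    have h1 := ((hMqmem z).1 hz P hP 0).1
    rwa [pow_zero, MulAut.one_apply] at h1
  obtain ⟨R, hshadow⟩ := shadow α hαc hαc' hMqcl hMqa hMqb hNn hNo
  have hVgo : IsOpen ((gauge α N R : Subgroup G) : Set G) := isOpen_gauge hαc hαc' hNo R
  set V : Subgroup G := (N ⊓ gauge α N R) ⊓ pre α 1 (gauge α N R) with hV
  have hVo : IsOpen (V : Set G) := by
    rw [hV, Subgroup.coe_inf, Subgroup.coe_inf]
    exact ((hNo.inter hVgo).inter (isOpen_pre hαc 1 hVgo))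
  have hVle : V ≤ N := fun v hv => (Subgroup.mem_inf.1 (Subgroup.mem_inf.1 hv).1).1
  have hVleVg : V ≤ gauge α N R := fun v hv => (Subgroup.mem_inf.1 (Subgroup.mem_inf.1 hv).1).2
  have hVshift : ∀ v ∈ V, α v ∈ gauge α N R := by
    intro v hv
    have h1 := (Subgroup.mem_inf.1 hv).2
    rw [mem_pre, pow_one] at h1
    exact h1
  set U : Set G := (Mq : Set G) * (V : Set G) with hU
  have hUo : IsOpen U := IsOpen.mul_left hVo
  obtain ⟨m', hm'⟩ := tail_into α hαc hαc' (fun P hP => isClosed_coe (hgood P hP).2.1) hyt hUo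
    (fun z hz => ⟨z, (hMqmem z).2 hz, 1, V.one_mem, mul_one z⟩)
  have hdec : ∀ k : ℕ, ∃ a, a ∈ Mq ∧ ∃ v, v ∈ V ∧ a * v = (α ^ (m' + k)) y := by
    intro k
    have h1 := hm' (m' + k) (by omega)
    obtain ⟨a, ha, v, hv, hav⟩ := Set.mem_mul.1 h1
    exact ⟨a, ha, v, hv, hav⟩
  choose a haM v hvV hav using hdec
  set μ : ℕ → G := fun n => if n ≤ R + 1 then (α⁻¹ ^ (R + 1 - n)) (a 0) else a (n - (R + 1))
    with hμ
  have hμa : ∀ k, μ (k + (R + 1)) = a k := by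
    intro k
    cases k with
    | zero =>
      have h1 : (0 : ℕ) + (R + 1) ≤ R + 1 := by omega
      have h2 : R + 1 - ((0 : ℕ) + (R + 1)) = 0 := by omega
      simp [hμ, h1, h2]; rfl
    | succ k =>
      have h1 : ¬ (k + 1 + (R + 1) ≤ R + 1) := by omega
      have h2 : k + 1 + (R + 1) - (R + 1) = k + 1 := by omega
      simp [hμ, h1, h2]
  have hμM : ∀ n, μ n ∈ Mq := by
    intro n
    by_cases hn : n ≤ R + 1
    · have h1 : μ n = (α⁻¹ ^ (R + 1 - n)) (a 0) := by simp [hμ, hn]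
      rw [h1]
      exact pow_mem_inv_subgroup (α := α⁻¹) (M := Mq) hMqb (R + 1 - n) (a 0) (haM 0)
    · have h1 : μ n = a (n - (R + 1)) := by simp [hμ, hn]
      rw [h1]; exact haM _
  have hμpad : ∀ n, n ≤ R + 1 → μ n = (α⁻¹ ^ (R + 1 - n)) (μ (R + 1)) := by
    intro n hn
    have h1 : μ (R + 1) = a 0 := by
      have h2 := hμa 0
      rwa [show (0 : ℕ) + (R + 1) = R + 1 from by omega] at h2
    rw [h1]
    simp [hμ, hn]
  have hμerr : ∀ n, (α (μ n))⁻¹ * μ (n + 1) ∈ gauge α N R := by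
    intro n
    by_cases hn : n + 1 ≤ R + 1
    · have h1 : μ n = (α⁻¹ ^ (R + 1 - n)) (a 0) := by
        simp [hμ, show n ≤ R + 1 from by omega]
      have h2 : μ (n+1) = (α⁻¹ ^ (R + 1 - (n+1))) (a 0) := by
        simp [hμ, hn]
      have h3 : α (μ n) = μ (n + 1) := by
        rw [h1, h2, show R + 1 - n = (R + 1 - (n+1)) + 1 from by omega, aut_apply_invpow_succ]
      rw [h3, inv_mul_cancel]
      exact (gauge α N R).one_mem
    · set k : ℕ := n - (R + 1) with hk
      have hn1 : n = k + (R + 1) := by omega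
      have hn2 : n + 1 = (k + 1) + (R + 1) := by omega
      have e1 : μ n = a k := by rw [hn1]; exact hμa k
      have e2 : μ (n + 1) = a (k + 1) := by rw [hn2]; exact hμa (k+1)
      have e3 : α (a k) * α (v k) = a (k+1) * v (k+1) := by
        rw [← map_mul, hav k, hav (k+1), ← pow_succ_apply' α (m' + k) y,
          show m' + k + 1 = m' + (k+1) from by omega]
      have e4 : (α (a k))⁻¹ * a (k + 1) = α (v k) * (v (k + 1))⁻¹ := by
        have h5 : a (k+1) = α (a k) * α (v k) * (v (k+1))⁻¹ := by
          rw [e3]; group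
        rw [h5]; group
      rw [e1, e2, e4]
      exact (gauge α N R).mul_mem (hVshift (v k) (hvV k))
        ((gauge α N R).inv_mem (hVleVg (hvV (k+1))))
  obtain ⟨ν, hνM, hνsh⟩ := hshadow μ hμM hμpad hμerr
  set c : G := (α⁻¹ ^ m') (((α ^ (R + 1)) ν)⁻¹) with hc
  have hcM : c ∈ Mq := by
    rw [hc]
    exact pow_mem_inv_subgroup (α := α⁻¹) (M := Mq) hMqb m' _
      (Mq.inv_mem (pow_mem_inv_subgroup (α := α) (M := Mq) hMqa (R+1) ν hνM))
  refine ⟨m', ⟨y * c, ?_, ?_⟩⟩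
  · have h1 : g⁻¹ * (y * c) = (g⁻¹ * y) * c := by group
    rw [h1]
    exact N₀.mul_mem hyc (hMqle ((N₀ : Subgroup G), m₀) hbase hcM)
  · intro P hP n hn
    rcases Set.mem_insert_iff.1 hP with hPN | hPq
    · subst hPN
      have hn' : m' ≤ n := hn
      show (α ^ n) (y * c) ∈ N
      set k : ℕ := n - m' with hk2
      have hn1 : n = m' + k := by omega
      have hy1 : (α ^ n) y = a k * v k := by rw [hn1, ← hav k]
      have hc1 : (α ^ n) c = ((α ^ (k + (R+1))) ν)⁻¹ := by
        rw [hc, pow_apply_invpow_ge α (show m' ≤ n from hn'), map_inv,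
          show n - m' = k from by omega, ← pow_apply_add]
      have hw : (a k)⁻¹ * (α ^ (k + (R+1))) ν ∈ N := by
        have h6 := hνsh (k + (R + 1))
        rwa [hμa k] at h6
      have hfin : (α ^ n) (y * c) =
          (a k) * ((v k) * ((a k)⁻¹ * (α ^ (k + (R+1))) ν)⁻¹) * (a k)⁻¹ := by
        rw [map_mul, hy1, hc1]; group
      rw [hfin]
      have hin : (v k) * ((a k)⁻¹ * (α ^ (k + (R+1))) ν)⁻¹ ∈ N :=
        N.mul_mem (hVle (hvV k)) (N.inv_mem hw)
      exact hNn.conj_mem _ hin (a k)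
    · have hsplit : (α ^ n) (y * c) = (α ^ n) y * (α ^ n) c := map_mul _ _ _
      rw [hsplit]
      exact (P.1).mul_mem (hyt P hPq n hn)
        (hMqle P hPq (pow_mem_inv_subgroup (α := α) (M := Mq) hMqa n c hcM))

end Assemble


section Final

variable [Group G] [TopologicalSpace G] [IsTopologicalGroup G] [CompactSpace G] [T2Space G]
  [TotallyDisconnectedSpace G]

theorem con_coset (α : MulAut G) (hαc : Continuous ⇑α) (hαc' : Continuous ⇑α⁻¹)
    (htt : ∃ x : G, Dense (Set.range fun n : ℤ => (α ^ n) x))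
    (g : G) {N₀ : Subgroup G} (hN₀n : N₀.Normal) (hN₀o : IsOpen (N₀ : Set G)) :
    ∃ y, g⁻¹ * y ∈ N₀ ∧ Tendsto (fun n : ℕ => (α ^ n) y) atTop (𝓝 1) := by
  classical
  obtain ⟨m₀, hm₀⟩ := dagger α hαc hαc' htt hN₀n hN₀o
  set Zcol : Set (Set (Subgroup G × ℕ)) :=
    {q | (∀ P ∈ q, P.1.Normal ∧ IsOpen ((P.1 : Set G)) ∧ P.1 ≤ N₀) ∧ (N₀, m₀) ∈ q ∧
      (Yset α g N₀ q).Nonempty} with hZcol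
  have h0 : ({(N₀, m₀)} : Set (Subgroup G × ℕ)) ∈ Zcol := by
    refine ⟨?_, Set.mem_singleton _, ?_⟩
    · intro P hP
      rw [Set.mem_singleton_iff] at hP
      subst hP
      exact ⟨hN₀n, hN₀o, le_refl N₀⟩
    · obtain ⟨c, hc1, hc2⟩ := hm₀ g
      refine ⟨c, hc1, ?_⟩
      intro P hP n hn
      rw [Set.mem_singleton_iff] at hP
      subst hP
      exact hc2 n hn
  have hchain : ∀ ch ⊆ Zcol, IsChain (· ⊆ ·) ch → ch.Nonempty →
      ∃ ub ∈ Zcol, ∀ s ∈ ch, s ⊆ ub := by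
    intro ch hchZ hchain hchne
    refine ⟨⋃₀ ch, ⟨?_, ?_, ?_⟩, fun s hs => Set.subset_sUnion_of_mem hs⟩
    · rintro P ⟨qq, hqq, hPq⟩
      exact (hchZ hqq).1 P hPq
    · obtain ⟨q1, hq1⟩ := hchne
      exact ⟨q1, hq1, (hchZ hq1).2.1⟩
    · haveI : Nonempty ch := hchne.to_subtype
      have hfam : ∀ qq : ch, (Yset α g N₀ (qq : Set (Subgroup G × ℕ))).Nonempty :=
        fun qq => (hchZ qq.2).2.2
      have hdir : Directed (· ⊇ ·) (fun qq : ch => Yset α g N₀ (qq : Set (Subgroup G × ℕ))) := by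
        intro q1 q2
        rcases hchain.total q1.2 q2.2 with h | h
        · exact ⟨q2, Yset_anti α g N₀ h, subset_rfl⟩
        · exact ⟨q1, subset_rfl, Yset_anti α g N₀ h⟩
      have hclos : ∀ qq : ch, IsClosed (Yset α g N₀ (qq : Set (Subgroup G × ℕ))) := fun qq =>
        isClosed_Yset α hαc g hN₀o (fun P hP => ((hchZ qq.2).1 P hP).2.1)
      obtain ⟨y, hy⟩ := IsCompact.nonempty_iInter_of_directed_nonempty_isCompact_isClosed
        _ hdir hfam (fun qq => (hclos qq).isCompact) hclos
      have hy' : ∀ qq : ch, y ∈ Yset α g N₀ (qq : Set (Subgroup G × ℕ)) := Set.mem_iInter.1 hy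
      refine ⟨y, ?_, ?_⟩
      · obtain ⟨q1, hq1⟩ := hchne
        exact (hy' ⟨q1, hq1⟩).1
      · rintro P ⟨qq, hqq, hPq⟩ n hn
        exact (hy' ⟨qq, hqq⟩).2 P hPq n hn
  obtain ⟨mx, hsub, hmax⟩ := zorn_subset_nonempty Zcol hchain _ h0
  have htot : ∀ N' : Subgroup G, N'.Normal → IsOpen ((N' : Set G)) → N' ≤ N₀ →
      ∃ m, (N', m) ∈ mx := by
    intro N' h1 h2 h3
    by_contra hno
    push_neg at hno
    obtain ⟨m, hm⟩ := successor α hαc hαc' hmax.1.1 hmax.1.2.1 hmax.1.2.2 h1 h2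
    have hins : insert (N', m) mx ∈ Zcol := by
      refine ⟨?_, Set.mem_insert_of_mem _ hmax.1.2.1, hm⟩
      intro P hP
      rcases Set.mem_insert_iff.1 hP with h4 | h4
      · subst h4; exact ⟨h1, h2, h3⟩
      · exact hmax.1.1 P h4
    have h5 : mx ⊆ insert (N', m) mx := Set.subset_insert _ _
    have h6 := hmax.2 hins h5
    exact hno m (h6 (Set.mem_insert _ _))
  obtain ⟨y, hyc, hyt⟩ := hmax.1.2.2
  refine ⟨y, hyc, ?_⟩
  rw [Filter.tendsto_def]
  intro s hs
  obtain ⟨N, hNn, hNo, hNU⟩ := exists_openNormal_sub hs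
  obtain ⟨m, hm⟩ := htot (N ⊓ N₀) (normal_inf hNn hN₀n)
    (by rw [Subgroup.coe_inf]; exact hNo.inter hN₀o) inf_le_right
  have hev : ∀ᶠ n in atTop, (α ^ n) y ∈ s := by
    rw [Filter.eventually_atTop]
    refine ⟨m, fun n hn => ?_⟩
    have h7 : (α ^ n) y ∈ N ⊓ N₀ := hyt ((N ⊓ N₀ : Subgroup G), m) hm n hn
    exact hNU (SetLike.mem_coe.2 ((inf_le_left : N ⊓ N₀ ≤ N) h7))
  exact hev

theorem con_dense_master (α : MulAut G) (hαc : Continuous ⇑α) (hαc' : Continuous ⇑α⁻¹)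
    (htt : ∃ x : G, Dense (Set.range fun n : ℤ => (α ^ n) x)) :
    Dense {y : G | Tendsto (fun n : ℕ => (α ^ n) y) atTop (𝓝 1)} := by
  rw [dense_iff_inter_open]
  rintro U hUo ⟨g, hgU⟩
  have hU1 : (fun h : G => g * h) ⁻¹' U ∈ 𝓝 (1 : G) := by
    refine IsOpen.mem_nhds (hUo.preimage (continuous_const.mul continuous_id)) ?_
    simpa using hgU
  obtain ⟨N₀, hN₀n, hN₀o, hN₀U⟩ := exists_openNormal_sub hU1
  obtain ⟨y, hyc, hycon⟩ := con_coset α hαc hαc' htt g hN₀n hN₀o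
  refine ⟨y, ?_, hycon⟩
  have h2 : g * (g⁻¹ * y) ∈ U := hN₀U hyc
  simpa [← mul_assoc] using h2


theorem mem_commutator_bcg (α : MulAut G) {p r : G}
    (hp : Tendsto (fun n : ℕ => (α ^ n) p) atTop (𝓝 1))
    (hr : Tendsto (fun n : ℕ => (α⁻¹ ^ n) r) atTop (𝓝 1)) :
    Tendsto (fun n : ℕ => (α ^ n) ⁅p, r⁆) atTop (𝓝 1) ∧
    Tendsto (fun n : ℕ => (α⁻¹ ^ n) ⁅p, r⁆) atTop (𝓝 1) := by
  constructor
  · rw [Filter.tendsto_def]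
    intro s hs
    obtain ⟨N, hNn, hNo, hNU⟩ := exists_openNormal_sub hs
    have hmem : ∀ᶠ y in 𝓝 (1 : G), y ∈ (N : Set G) := hNo.mem_nhds N.one_mem
    have hev : ∀ᶠ n in atTop, (α ^ n) p ∈ (N : Set G) := hp.eventually hmem
    obtain ⟨m, hm⟩ := Filter.eventually_atTop.1 hev
    refine Filter.eventually_atTop.2 ⟨m, fun n hn => ?_⟩
    refine hNU (SetLike.mem_coe.2 ?_)
    show (α ^ n) ⁅p, r⁆ ∈ N
    have he : (α ^ n) ⁅p, r⁆ = ⁅(α ^ n) p, (α ^ n) r⁆ := by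
      simp [commutatorElement_def]
    rw [he]
    have ha : (α ^ n) p ∈ N := hm n hn
    have he2 : ⁅(α ^ n) p, (α ^ n) r⁆ =
        (α ^ n) p * ((α ^ n) r * ((α ^ n) p)⁻¹ * ((α ^ n) r)⁻¹) := by
      rw [commutatorElement_def]; group
    rw [he2]
    exact N.mul_mem ha (hNn.conj_mem _ (N.inv_mem ha) ((α ^ n) r))
  · rw [Filter.tendsto_def]
    intro s hs
    obtain ⟨N, hNn, hNo, hNU⟩ := exists_openNormal_sub hs
    have hmem : ∀ᶠ y in 𝓝 (1 : G), y ∈ (N : Set G) := hNo.mem_nhds N.one_mem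
    have hev : ∀ᶠ n in atTop, (α⁻¹ ^ n) r ∈ (N : Set G) := hr.eventually hmem
    obtain ⟨m, hm⟩ := Filter.eventually_atTop.1 hev
    refine Filter.eventually_atTop.2 ⟨m, fun n hn => ?_⟩
    refine hNU (SetLike.mem_coe.2 ?_)
    show (α⁻¹ ^ n) ⁅p, r⁆ ∈ N
    have he : (α⁻¹ ^ n) ⁅p, r⁆ = ⁅(α⁻¹ ^ n) p, (α⁻¹ ^ n) r⁆ := by
      simp [commutatorElement_def]
    rw [he]
    have hb : (α⁻¹ ^ n) r ∈ N := hm n hn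
    have he2 : ⁅(α⁻¹ ^ n) p, (α⁻¹ ^ n) r⁆ =
        ((α⁻¹ ^ n) p * (α⁻¹ ^ n) r * ((α⁻¹ ^ n) p)⁻¹) * ((α⁻¹ ^ n) r)⁻¹ := by
      rw [commutatorElement_def]
    rw [he2]
    exact N.mul_mem (hNn.conj_mem _ hb ((α⁻¹ ^ n) p)) (N.inv_mem hb)

end Final

end ConDenseAux

/-- For a topologically transitive compact pair, `con α` is dense in `G`
and the closure of `bcg α` contains the commutator subgroup. -/
theorem con_dense_and_commutator_subset_closure_bcg
    [Group G] [TopologicalSpace G] [IsTopologicalGroup G] [T2Space G]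
    [TotallyDisconnectedSpace G] [CompactSpace G]
    (α : MulAut G) (hαc : Continuous ⇑α) (hαc' : Continuous ⇑(α⁻¹))
    (htt : ∃ x : G, Dense (Set.range fun n : ℤ => (α ^ n) x)) :
    Dense (conSet α) ∧ (commutator G : Set G) ⊆ closure (bcgSet α) := by
  classical
  have hd1 : Dense (conSet α) := ConDenseAux.con_dense_master α hαc hαc' htt
  have hαinv : Continuous ⇑((α⁻¹ : MulAut G)⁻¹) := by rw [inv_inv]; exact hαc
  have htt' : ∃ x : G, Dense (Set.range fun n : ℤ => ((α⁻¹ : MulAut G) ^ n) x) := by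
    obtain ⟨x, hx⟩ := htt
    refine ⟨x, ?_⟩
    have key : ∀ n : ℤ, ((α⁻¹ : MulAut G) ^ n) = (α ^ (-n)) := fun n => by
      rw [inv_zpow, ← zpow_neg]
    have hrange : (Set.range fun n : ℤ => ((α⁻¹ : MulAut G) ^ n) x) =
        (Set.range fun n : ℤ => (α ^ n) x) := by
      ext z
      constructor
      · rintro ⟨n, rfl⟩
        refine ⟨-n, ?_⟩
        show (α ^ (-n)) x = (α⁻¹ ^ n) x
        rw [key n]
      · rintro ⟨n, rfl⟩
        refine ⟨-n, ?_⟩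
        show (α⁻¹ ^ (-n)) x = (α ^ n) x
        rw [key (-n), neg_neg]
    rw [hrange]
    exact hx
  have hd2 : Dense (conSet α⁻¹) := ConDenseAux.con_dense_master α⁻¹ hαc' hαinv htt'
  refine ⟨hd1, ?_⟩
  set B : Subgroup G :=
    { carrier := bcgSet α
      one_mem' := by
        constructor
        · show Tendsto (fun n : ℕ => (α ^ n) 1) atTop (𝓝 1)
          simpa using (tendsto_const_nhds : Tendsto (fun _ : ℕ => (1:G)) atTop (𝓝 1))
        · show Tendsto (fun n : ℕ => (α⁻¹ ^ n) 1) atTop (𝓝 1)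
          simpa using (tendsto_const_nhds : Tendsto (fun _ : ℕ => (1:G)) atTop (𝓝 1))
      mul_mem' := by
        rintro x y ⟨hx1, hx2⟩ ⟨hy1, hy2⟩
        constructor
        · show Tendsto (fun n : ℕ => (α ^ n) (x * y)) atTop (𝓝 1)
          have h := Filter.Tendsto.mul hx1 hy1
          rw [mul_one] at h
          simpa [map_mul] using h
        · show Tendsto (fun n : ℕ => (α⁻¹ ^ n) (x * y)) atTop (𝓝 1)
          have h := Filter.Tendsto.mul hx2 hy2
          rw [mul_one] at h
          simpa [map_mul] using h
      inv_mem' := by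
        rintro x ⟨hx1, hx2⟩
        constructor
        · show Tendsto (fun n : ℕ => (α ^ n) x⁻¹) atTop (𝓝 1)
          have h := Filter.Tendsto.inv hx1
          rw [inv_one] at h
          simpa [map_inv] using h
        · show Tendsto (fun n : ℕ => (α⁻¹ ^ n) x⁻¹) atTop (𝓝 1)
          have h := Filter.Tendsto.inv hx2
          rw [inv_one] at h
          simpa [map_inv] using h } with hB
  have hcont : Continuous (fun pq : G × G => ⁅pq.1, pq.2⁆) := by
    simp only [commutatorElement_def]
    exact ((continuous_fst.mul continuous_snd).mul continuous_fst.inv).mul continuous_snd.inv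
  have himg : (fun pq : G × G => ⁅pq.1, pq.2⁆) '' ((conSet α) ×ˢ (conSet α⁻¹)) ⊆ bcgSet α := by
    rintro _ ⟨⟨p, r⟩, ⟨hp, hr⟩, rfl⟩
    exact ConDenseAux.mem_commutator_bcg α hp hr
  have hclos : ∀ p r : G, ⁅p, r⁆ ∈ closure (bcgSet α) := by
    intro p r
    have h2 : (p, r) ∈ closure ((conSet α) ×ˢ (conSet α⁻¹)) := by
      rw [(hd1.prod hd2).closure_eq]
      trivial
    have h3 := Set.mem_image_of_mem (fun pq : G × G => ⁅pq.1, pq.2⁆) h2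
    have h4 := image_closure_subset_closure_image hcont h3
    exact closure_mono himg h4
  have hle : commutator G ≤ B.topologicalClosure := by
    rw [commutator_def]
    refine Subgroup.commutator_le.2 fun p _ r _ => ?_
    exact hclos p r
  intro z hz
  exact hle hz
end
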